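/- arXiv:0704.0417 — 9 statements merged into one kernel-verified Lean document; each statement's English description precedes it below -/
import Mathlib

section
/- The function V is stable: for every finitely supported ρ : ℤ → ℝ with ρ n ≥ 0 for all n, the double sum ∑_{m,n ∈ ℤ} ρ m * V (m - n) * ρ n is ≥ 0. -/
open Finset

/-- The potential `V` on `ℤ`: `V 0 = V 2 = V (-2) = 1`, `V 1 = V (-1) = -1`,
and `V n = 0` for `|n| ≥ 3`. -/
def V : ℤ → ℝ := fun n =>
  if n = 0 ∨ n = 2 ∨ n = -2 then 1
  else if n = 1 ∨ n = -1 then -1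
  else 0

/-- A pair potential `V : ℤ → ℝ` is stable if every nonnegative finitely supported
density has nonnegative energy. -/
def IsStable (V : ℤ → ℝ) : Prop :=
  ∀ ρ : ℤ → ℝ, (Function.support ρ).Finite → (∀ n, 0 ≤ ρ n) →
    0 ≤ ∑ᶠ m, ∑ᶠ n, ρ m * V (m - n) * ρ n

lemma V_zero : V 0 = 1 := by norm_num [V]
lemma V_one : V 1 = -1 := by norm_num [V]
lemma V_two : V 2 = 1 := by norm_num [V]
lemma V_neg_one : V (-1) = -1 := by norm_num [V]
lemma V_neg_two : V (-2) = 1 := by norm_num [V]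

lemma V_big {k : ℤ} (h : 3 ≤ k ∨ k ≤ -3) : V k = 0 := by
  unfold V
  split_ifs with h1 h2
  · omega
  · omega
  · rfl

/-- Auxiliary potential-like function: `g u v = (max (v - u) 0)^2`. -/
noncomputable def g (u v : ℝ) : ℝ := (max (v - u) 0) ^ 2

lemma g_nonneg (u v : ℝ) : 0 ≤ g u v := sq_nonneg _

lemma g_step (x y z : ℝ) (hx : 0 ≤ x) (hy : 0 ≤ y) (hz : 0 ≤ z) :
    g y z ≤ g x y + z ^ 2 - 2 * z * y + 2 * z * x := by
  unfold g
  rcases le_total (z - y) 0 with h1 | h1 <;> rcases le_total (y - x) 0 with h2 | h2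
  · rw [max_eq_right h1, max_eq_right h2]
    nlinarith [mul_nonneg hz hx, mul_nonneg hz hz, mul_nonneg hz (by linarith : (0:ℝ) ≤ x - y)]
  · rw [max_eq_right h1, max_eq_left h2]
    nlinarith [sq_nonneg (y - x - z)]
  · rw [max_eq_left h1, max_eq_right h2]
    nlinarith [mul_le_mul (by linarith : y ≤ x) (by linarith : y ≤ z) hy hx]
  · rw [max_eq_left h1, max_eq_left h2]
    nlinarith [mul_nonneg hx (by linarith : (0:ℝ) ≤ x + 2 * (z - y))]

lemma cross1 (ρ : ℤ → ℝ) (a b : ℤ) (hab : a ≤ b - 1) :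
    ∑ n ∈ Icc a b, ρ (b + 1) * V (b + 1 - n) * ρ n
      = ρ (b + 1) * ρ (b - 1) - ρ (b + 1) * ρ b := by
  have hsub : ({b - 1, b} : Finset ℤ) ⊆ Icc a b := by
    intro x hx
    simp only [Finset.mem_insert, Finset.mem_singleton] at hx
    rw [Finset.mem_Icc]; omega
  rw [← Finset.sum_subset hsub (by
    intro x hx hnx
    simp only [Finset.mem_insert, Finset.mem_singleton, not_or] at hnx
    rw [Finset.mem_Icc] at hx
    rw [V_big (Or.inl (by omega : (3:ℤ) ≤ b + 1 - x))]
    ring)]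
  rw [Finset.sum_pair (by omega : b - 1 ≠ b)]
  rw [show b + 1 - (b - 1) = 2 by ring, show b + 1 - b = 1 by ring, V_two, V_one]
  ring

lemma cross2 (ρ : ℤ → ℝ) (a b : ℤ) (hab : a ≤ b - 1) :
    ∑ m ∈ Icc a b, ρ m * V (m - (b + 1)) * ρ (b + 1)
      = ρ (b + 1) * ρ (b - 1) - ρ (b + 1) * ρ b := by
  have hsub : ({b - 1, b} : Finset ℤ) ⊆ Icc a b := by
    intro x hx
    simp only [Finset.mem_insert, Finset.mem_singleton] at hx
    rw [Finset.mem_Icc]; omega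
  rw [← Finset.sum_subset hsub (by
    intro x hx hnx
    simp only [Finset.mem_insert, Finset.mem_singleton, not_or] at hnx
    rw [Finset.mem_Icc] at hx
    rw [V_big (Or.inr (by omega : x - (b + 1) ≤ -3))]
    ring)]
  rw [Finset.sum_pair (by omega : b - 1 ≠ b)]
  rw [show b - 1 - (b + 1) = -2 by ring, show b - (b + 1) = -1 by ring, V_neg_two, V_neg_one]
  ring

lemma main_induction (ρ : ℤ → ℝ) (hpos : ∀ n, 0 ≤ ρ n) (a : ℤ)
    (hpad : ∀ k, k ≤ a + 2 → ρ k = 0) :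
    ∀ b, a + 2 ≤ b →
      g (ρ (b - 1)) (ρ b) ≤ ∑ m ∈ Icc a b, ∑ n ∈ Icc a b, ρ m * V (m - n) * ρ n := by
  refine Int.le_induction ?_ ?_
  · -- base case b = a + 2
    have h1 : ρ (a + 2 - 1) = 0 := hpad _ (by omega)
    have h2 : ρ (a + 2) = 0 := hpad _ le_rfl
    rw [h1, h2]
    have hz : ∑ m ∈ Icc a (a + 2), ∑ n ∈ Icc a (a + 2), ρ m * V (m - n) * ρ n = 0 := by
      apply Finset.sum_eq_zero
      intro m hm
      rw [Finset.mem_Icc] at hm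
      apply Finset.sum_eq_zero
      intro n _
      rw [hpad m (by omega)]
      ring
    rw [hz]
    simp [g]
  · intro b hb ih
    have hins : Icc a (b + 1) = insert (b + 1) (Icc a b) := by
      ext x
      simp only [Finset.mem_Icc, Finset.mem_insert]
      omega
    have hnotmem : (b + 1) ∉ Icc a b := by
      rw [Finset.mem_Icc]; omega
    rw [hins]
    rw [Finset.sum_insert hnotmem]
    have hrw : ∀ m : ℤ, ∑ n ∈ insert (b + 1) (Icc a b), ρ m * V (m - n) * ρ n
        = ρ m * V (m - (b + 1)) * ρ (b + 1) + ∑ n ∈ Icc a b, ρ m * V (m - n) * ρ n :=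
      fun m => Finset.sum_insert hnotmem
    rw [hrw, Finset.sum_congr rfl (fun m _ => hrw m), Finset.sum_add_distrib]
    rw [cross1 ρ a b (by omega), cross2 ρ a b (by omega)]
    rw [show b + 1 - (b + 1) = 0 by ring, V_zero]
    have hstep := g_step (ρ (b - 1)) (ρ b) (ρ (b + 1)) (hpos _) (hpos _) (hpos _)
    have : ρ (b + 1 - 1) = ρ b := by norm_num
    rw [this]
    nlinarith [hstep, ih]

theorem V_isStable : IsStable V := by
  intro ρ hfin hpos
  classical
  set s : Finset ℤ := insert 0 hfin.toFinset with hs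
  have hsne : s.Nonempty := Finset.insert_nonempty _ _
  set lo : ℤ := s.min' hsne with hlo
  set hi : ℤ := s.max' hsne with hhi
  have hlohi : lo ≤ hi := s.min'_le _ (s.max'_mem hsne)
  set a : ℤ := lo - 3 with ha
  set b : ℤ := hi with hbdef
  have hmem : ∀ k : ℤ, ρ k ≠ 0 → lo ≤ k ∧ k ≤ hi := by
    intro k hk
    have : k ∈ s := Finset.mem_insert_of_mem (hfin.mem_toFinset.mpr hk)
    exact ⟨s.min'_le _ this, s.le_max' _ this⟩
  have hpad : ∀ k, k ≤ a + 2 → ρ k = 0 := by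
    intro k hk
    by_contra h
    have := hmem k h
    omega
  have hsupp : Function.support ρ ⊆ ↑(Icc a b) := by
    intro k hk
    have := hmem k hk
    simp only [Finset.coe_Icc, Set.mem_Icc]
    omega
  have hinner : ∀ m : ℤ, ∑ᶠ n, ρ m * V (m - n) * ρ n
      = ∑ n ∈ Icc a b, ρ m * V (m - n) * ρ n := by
    intro m
    apply finsum_eq_sum_of_support_subset
    intro n hn
    apply hsupp
    intro hρ
    apply hn
    simp [hρ]
  have houter : ∑ᶠ m, ∑ᶠ n, ρ m * V (m - n) * ρ n
      = ∑ m ∈ Icc a b, ∑ n ∈ Icc a b, ρ m * V (m - n) * ρ n := by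
    rw [show (fun m => ∑ᶠ n, ρ m * V (m - n) * ρ n)
        = fun m => ∑ n ∈ Icc a b, ρ m * V (m - n) * ρ n from funext hinner]
    apply finsum_eq_sum_of_support_subset
    intro m hm
    apply hsupp
    intro hρ
    apply hm
    simp only [hρ]
    simp
  rw [houter]
  calc (0:ℝ) ≤ g (ρ (b - 1)) (ρ b) := g_nonneg _ _
    _ ≤ _ := main_induction ρ hpos a hpad b (by omega)
end

section
/- The function V is not the sum of a nonnegative function and a positive definite function: there do not exist f, g : ℤ → ℝ such that f n ≥ 0 for all n, g is positive definite, and V = f + g. -/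
open Finset
open scoped ComplexOrder

/-- A real-valued function on an additive abelian group is positive definite if all its
"quadratic forms" with complex coefficients are real and nonnegative. -/
def IsPosDef {G : Type*} [AddCommGroup G] (g : G → ℝ) : Prop :=
  ∀ (N : ℕ) (x : Fin N → G) (c : Fin N → ℂ),
    0 ≤ ∑ i, ∑ j, c i * (starRingEnd ℂ) (c j) * (g (x i - x j) : ℂ)

lemma posdef_real {g : ℤ → ℝ} (hg : IsPosDef g) (N : ℕ) (x : Fin N → ℤ) (c : Fin N → ℝ) :
    0 ≤ ∑ i, ∑ j, c i * c j * g (x i - x j) := by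
  have h := hg N x (fun i => (c i : ℂ))
  have he : ∑ i, ∑ j, (c i : ℂ) * (starRingEnd ℂ) (c j) * (g (x i - x j) : ℂ)
      = ((∑ i, ∑ j, c i * c j * g (x i - x j) : ℝ) : ℂ) := by
    push_cast [Complex.conj_ofReal]
    ring_nf
  rw [he] at h
  exact_mod_cast h

theorem V_not_decomposable :
    ¬ ∃ f g : ℤ → ℝ, (∀ n, 0 ≤ f n) ∧ IsPosDef g ∧ V = f + g := by
  rintro ⟨f, g, hf, hg, hV⟩
  have hgn : ∀ n : ℤ, g n = V n - f n := by
    intro n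
    have := congrFun hV n
    simp [Pi.add_apply] at this
    linarith
  have hb : ∀ n : ℤ, g n ≤ V n := fun n => by have := hf n; rw [hgn n]; linarith
  have b0 : g 0 ≤ 1 := by simpa [V] using hb 0
  have b1 : g 1 ≤ -1 := by simpa [V] using hb 1
  have b1' : g (-1) ≤ -1 := by simpa [V] using hb (-1)
  have b2 : g 2 ≤ 1 := by simpa [V] using hb 2
  have b2' : g (-2) ≤ 1 := by simpa [V] using hb (-2)
  have b3 : g 3 ≤ 0 := by simpa [V] using hb 3
  have b3' : g (-3) ≤ 0 := by simpa [V] using hb (-3)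
  have b4 : g 4 ≤ 0 := by simpa [V] using hb 4
  have b4' : g (-4) ≤ 0 := by simpa [V] using hb (-4)
  have Q1 := posdef_real hg 2 ![0, 1] ![1, 1]
  have Q2 := posdef_real hg 3 ![0, 1, 2] ![1, 2, 1]
  have Q3 := posdef_real hg 4 ![0, 1, 2, 3] ![1, 2, 0, -1]
  have Q4 := posdef_real hg 5 ![0, 1, 2, 3, 4] ![1, 2, 0, 0, 1]
  simp [Fin.sum_univ_succ] at Q1 Q2 Q3 Q4
  norm_num at Q1 Q2 Q3 Q4
  linarith
end

section
/- Cutting the chain lowers the energy: let ρ : ℤ → ℝ be finitely supported with ρ m ≥ 0 for all m, let n ∈ ℤ, and define ρ_L m = ρ m for m ≤ n+1 and ρ_L m = 0 for m ≥ n+2, and ρ_R = ρ - ρ_L. Then Q(ρ) - Q(ρ_L) - Q(ρ_R) = 2*(ρ n - ρ (n+1))*ρ (n+2) + 2*ρ (n+1)*ρ (n+3); in particular, if ρ n ≥ ρ (n+1) then Q(ρ) ≥ Q(ρ_L) + Q(ρ_R). -/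
open Finset

/-- The energy of a density `ρ` with the potential `V`. -/
noncomputable def Q (ρ : ℤ → ℝ) : ℝ := ∑ᶠ m, ∑ᶠ n, ρ m * V (m - n) * ρ n

lemma V_neg (x : ℤ) : V (-x) = V x := by
  unfold V
  split_ifs <;> first | rfl | omega

lemma V_zero_of (x : ℤ) (h : 3 ≤ x ∨ x ≤ -3) : V x = 0 := by
  unfold V
  split_ifs <;> first | rfl | omega

lemma Q_eq (a : ℤ → ℝ) (s : Finset ℤ) (hs : Function.support a ⊆ s) :
    Q a = ∑ m ∈ s, ∑ k ∈ s, a m * V (m - k) * a k := by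
  rw [Q, finsum_eq_finset_sum_of_support_subset]
  · refine Finset.sum_congr rfl fun m _ => ?_
    apply finsum_eq_finset_sum_of_support_subset
    intro k hk
    apply hs
    intro h0
    apply hk
    simp [h0]
  · intro m hm
    apply hs
    intro h0
    apply hm
    simp [h0]

theorem cutting_the_chain (ρ : ℤ → ℝ) (hfin : (Function.support ρ).Finite)
    (hρ : ∀ m, 0 ≤ ρ m) (n : ℤ)
    (ρL : ℤ → ℝ) (hρL : ρL = fun m => if m ≤ n + 1 then ρ m else 0)
    (ρR : ℤ → ℝ) (hρR : ρR = ρ - ρL) :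
    Q ρ - Q ρL - Q ρR
      = 2 * (ρ n - ρ (n + 1)) * ρ (n + 2) + 2 * ρ (n + 1) * ρ (n + 3) ∧
    (ρ (n + 1) ≤ ρ n → Q ρL + Q ρR ≤ Q ρ) := by
  -- pointwise facts
  have hL_le : ∀ m, m ≤ n + 1 → ρL m = ρ m := by
    intro m hm; rw [hρL]; simp [hm]
  have hL_gt : ∀ m, n + 1 < m → ρL m = 0 := by
    intro m hm; rw [hρL]; simp [not_le.mpr hm]
  have hR_le : ∀ m, m ≤ n + 1 → ρR m = 0 := by
    intro m hm; rw [hρR]; simp [hL_le m hm]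
  have hR_gt : ∀ m, n + 1 < m → ρR m = ρ m := by
    intro m hm; rw [hρR]; simp [hL_gt m hm]
  have hsum : ∀ m, ρ m = ρL m + ρR m := by
    intro m; rw [hρR]; simp
  -- the big finset
  set s : Finset ℤ := hfin.toFinset ∪ {n, n + 1, n + 2, n + 3} with hs
  have hρs : Function.support ρ ⊆ s := by
    intro m hm
    simp [hs, Set.Finite.mem_toFinset, hm]
  have hLs : Function.support ρL ⊆ s := by
    intro m hm
    apply hρs
    intro h0
    apply hm
    rw [hρL]; simp [h0]
  have hRs : Function.support ρR ⊆ s := by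
    intro m hm
    apply hρs
    intro h0
    apply hm
    rw [hρR, hρL]; simp [h0]
  have hns : ∀ k : ℤ, k = n ∨ k = n + 1 ∨ k = n + 2 ∨ k = n + 3 → k ∈ s := by
    intro k hk
    simp only [hs, Finset.mem_union, Finset.mem_insert, Finset.mem_singleton]
    tauto
  -- the cross term
  have key : ∑ m ∈ s, ∑ k ∈ s, ρL m * V (m - k) * ρR k
      = (ρ n - ρ (n + 1)) * ρ (n + 2) + ρ (n + 1) * ρ (n + 3) := by
    have h1 : ∑ m ∈ s, ∑ k ∈ s, ρL m * V (m - k) * ρR k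
        = ∑ m ∈ ({n, n + 1} : Finset ℤ), ∑ k ∈ s, ρL m * V (m - k) * ρR k := by
      symm
      apply Finset.sum_subset
      · intro m hm
        simp only [Finset.mem_insert, Finset.mem_singleton] at hm
        apply hns; tauto
      · intro m _ hm
        simp only [Finset.mem_insert, Finset.mem_singleton, not_or] at hm
        apply Finset.sum_eq_zero
        intro k _
        rcases lt_or_ge (n+1) m with h | h
        · rw [hL_gt m h]; ring
        · rcases lt_or_ge (n+1) k with h' | h'
          · have : m < n := by omega
            rw [V_zero_of (m - k) (by omega)]; ring
          · rw [hR_le k h']; ring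
    have h2 : ∑ k ∈ s, ρL n * V (n - k) * ρR k
        = ρL n * V (n - (n+2)) * ρR (n+2) := by
      rw [show ρL n * V (n - (n+2)) * ρR (n+2)
          = ∑ k ∈ ({n+2} : Finset ℤ), ρL n * V (n - k) * ρR k by simp]
      symm
      apply Finset.sum_subset
      · intro k hk
        simp only [Finset.mem_singleton] at hk
        apply hns; tauto
      · intro k _ hk
        simp only [Finset.mem_singleton] at hk
        rcases lt_or_ge (n+1) k with h' | h'
        · rw [V_zero_of (n - k) (by omega)]; ring
        · rw [hR_le k h']; ring
    have h3 : ∑ k ∈ s, ρL (n+1) * V (n+1 - k) * ρR k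
        = ρL (n+1) * V (n+1 - (n+2)) * ρR (n+2)
          + ρL (n+1) * V (n+1 - (n+3)) * ρR (n+3) := by
      rw [show ρL (n+1) * V (n+1 - (n+2)) * ρR (n+2)
            + ρL (n+1) * V (n+1 - (n+3)) * ρR (n+3)
          = ∑ k ∈ ({n+2, n+3} : Finset ℤ), ρL (n+1) * V (n+1 - k) * ρR k by
        rw [Finset.sum_pair (by omega)]]
      symm
      apply Finset.sum_subset
      · intro k hk
        simp only [Finset.mem_insert, Finset.mem_singleton] at hk
        apply hns; tauto
      · intro k _ hk
        simp only [Finset.mem_insert, Finset.mem_singleton, not_or] at hk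
        rcases lt_or_ge (n+1) k with h' | h'
        · rw [V_zero_of (n+1 - k) (by omega)]; ring
        · rw [hR_le k h']; ring
    rw [h1, Finset.sum_pair (show n ≠ n + 1 by omega), h2, h3]
    rw [hL_le n (by omega), hL_le (n+1) (by omega),
        hR_gt (n+2) (by omega), hR_gt (n+3) (by omega)]
    have v1 : V (n - (n+2)) = 1 := by norm_num [V, show n - (n+2) = -2 by ring]
    have v2 : V (n+1 - (n+2)) = -1 := by norm_num [V, show n+1 - (n+2) = -1 by ring]
    have v3 : V (n+1 - (n+3)) = 1 := by norm_num [V, show n+1 - (n+3) = -2 by ring]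
    rw [v1, v2, v3]; ring
  -- expand Q
  rw [Q_eq ρ s hρs, Q_eq ρL s hLs, Q_eq ρR s hRs]
  have expand : ∑ m ∈ s, ∑ k ∈ s, ρ m * V (m - k) * ρ k
      = (∑ m ∈ s, ∑ k ∈ s, ρL m * V (m - k) * ρL k)
      + (∑ m ∈ s, ∑ k ∈ s, ρR m * V (m - k) * ρR k)
      + (∑ m ∈ s, ∑ k ∈ s, ρL m * V (m - k) * ρR k)
      + (∑ m ∈ s, ∑ k ∈ s, ρR m * V (m - k) * ρL k) := by
    rw [← Finset.sum_add_distrib, ← Finset.sum_add_distrib, ← Finset.sum_add_distrib]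
    refine Finset.sum_congr rfl fun m _ => ?_
    rw [← Finset.sum_add_distrib, ← Finset.sum_add_distrib, ← Finset.sum_add_distrib]
    refine Finset.sum_congr rfl fun k _ => ?_
    rw [hsum m, hsum k]; ring
  have swap : ∑ m ∈ s, ∑ k ∈ s, ρR m * V (m - k) * ρL k
      = ∑ m ∈ s, ∑ k ∈ s, ρL m * V (m - k) * ρR k := by
    rw [Finset.sum_comm]
    refine Finset.sum_congr rfl fun m _ => Finset.sum_congr rfl fun k _ => ?_
    rw [show m - k = -(k - m) by ring, V_neg]; ring
  have main : (∑ m ∈ s, ∑ k ∈ s, ρ m * V (m - k) * ρ k)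
      - (∑ m ∈ s, ∑ k ∈ s, ρL m * V (m - k) * ρL k)
      - (∑ m ∈ s, ∑ k ∈ s, ρR m * V (m - k) * ρR k)
      = 2 * (ρ n - ρ (n + 1)) * ρ (n + 2) + 2 * ρ (n + 1) * ρ (n + 3) := by
    rw [expand, swap, key]; ring
  refine ⟨main, fun hle => ?_⟩
  nlinarith [main, hρ n, hρ (n+1), hρ (n+2), hρ (n+3),
    mul_nonneg (sub_nonneg.mpr hle) (hρ (n+2)),
    mul_nonneg (hρ (n+1)) (hρ (n+3))]
end

section
/- The 5-periodic function μ is positive definite on ℤ. -/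
open Finset
open scoped ComplexOrder

/-- The 5-periodic function `μ` on `ℤ`: `μ n = 1` if `n ≡ 0 [ZMOD 5]`,
`μ n = (√5 - 1)/2` if `n ≡ ±1 [ZMOD 5]`, and `μ n = 0` if `n ≡ ±2 [ZMOD 5]`. -/
noncomputable def μ : ℤ → ℝ := fun n =>
  if (n : ZMod 5) = 0 then 1
  else if (n : ZMod 5) = 1 ∨ (n : ZMod 5) = -1 then (Real.sqrt 5 - 1) / 2
  else 0

namespace MuPD

noncomputable def ω : ℂ := Complex.exp ((2 * Real.pi / 5 : ℝ) * Complex.I)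

noncomputable def a₀ : ℝ := Real.sqrt 5 / 5
noncomputable def a₁ : ℝ := (5 - Real.sqrt 5) / 10

lemma sqrt5_sq : Real.sqrt 5 ^ 2 = 5 := Real.sq_sqrt (by norm_num)

lemma sqrt5_nonneg : 0 ≤ Real.sqrt 5 := Real.sqrt_nonneg 5

lemma a₀_nonneg : 0 ≤ a₀ := by unfold a₀; positivity

lemma a₁_nonneg : 0 ≤ a₁ := by
  have h := sqrt5_sq
  have h2 := sqrt5_nonneg
  unfold a₁; nlinarith

lemma abs_ω : ‖ω‖ = 1 := Complex.norm_exp_ofReal_mul_I _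

lemma ω_ne_zero : ω ≠ 0 := by
  intro h
  simpa [h] using abs_ω

lemma conj_ω_zpow (m : ℤ) : (starRingEnd ℂ) (ω ^ m) = ω ^ (-m) := by
  rw [map_zpow₀, ← Complex.inv_eq_conj abs_ω, inv_zpow, ← zpow_neg]

lemma ω_pow_five : ω ^ (5 : ℤ) = 1 := by
  have h : ((5:ℕ) : ℂ) * ((2 * Real.pi / 5 : ℝ) * Complex.I) = 2 * Real.pi * Complex.I := by
    push_cast; ring
  rw [show (5:ℤ) = ((5:ℕ):ℤ) by norm_num, zpow_natCast, ω, ← Complex.exp_nat_mul, h,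
    Complex.exp_two_pi_mul_I]

lemma ω_zpow_emod (n : ℤ) : ω ^ n = ω ^ (n % 5) := by
  conv_lhs => rw [← Int.emod_add_mul_ediv n 5]
  rw [zpow_add₀ ω_ne_zero, zpow_mul, ω_pow_five, one_zpow, mul_one]

lemma ω_add_conj (r : ℕ) :
    ω ^ (r : ℤ) + ω ^ (-(r : ℤ)) = ((2 * Real.cos (r * (2 * Real.pi / 5)) : ℝ) : ℂ) := by
  have h1 : ω ^ (r : ℤ) = Complex.exp (((r * (2 * Real.pi / 5) : ℝ)) * Complex.I) := by
    rw [zpow_natCast, ω, ← Complex.exp_nat_mul]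
    push_cast; ring_nf
  have h2 := Complex.add_conj (ω ^ (r : ℤ))
  rw [conj_ω_zpow] at h2
  rw [h2, h1, Complex.exp_ofReal_mul_I_re]

lemma cos_two_pi_div_five : Real.cos (2 * Real.pi / 5) = (Real.sqrt 5 - 1) / 4 := by
  have h : Real.cos (2 * (Real.pi / 5)) = 2 * Real.cos (Real.pi / 5) ^ 2 - 1 :=
    Real.cos_two_mul _
  rw [Real.cos_pi_div_five] at h
  rw [show 2 * Real.pi / 5 = 2 * (Real.pi / 5) by ring, h]
  have := sqrt5_sq
  nlinarith

lemma cos_four_pi_div_five : Real.cos (4 * Real.pi / 5) = -(1 + Real.sqrt 5) / 4 := by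
  rw [show 4 * Real.pi / 5 = Real.pi - Real.pi / 5 by ring, Real.cos_pi_sub,
    Real.cos_pi_div_five]
  ring

lemma cos_six_pi_div_five : Real.cos (6 * Real.pi / 5) = -(1 + Real.sqrt 5) / 4 := by
  rw [show 6 * Real.pi / 5 = Real.pi / 5 + Real.pi by ring, Real.cos_add_pi,
    Real.cos_pi_div_five]
  ring

lemma cos_eight_pi_div_five : Real.cos (8 * Real.pi / 5) = (Real.sqrt 5 - 1) / 4 := by
  rw [show 8 * Real.pi / 5 = -(2 * Real.pi / 5) + 2 * Real.pi by ring,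
    Real.cos_add_two_pi, Real.cos_neg, cos_two_pi_div_five]

lemma hval (k : ℤ) (r : ℕ) (hk : k = (r : ℤ)) (v : ℝ)
    (hcos : Real.cos (r * (2 * Real.pi / 5)) = v) :
    ω ^ k + ω ^ (-k) = ((2 * v : ℝ) : ℂ) := by
  subst hk; rw [ω_add_conj, hcos]

lemma key (n : ℤ) :
    (μ n : ℂ) = (a₀ : ℝ) + (a₁ : ℝ) * (ω ^ n + ω ^ (-n)) := by
  have hne : ω ^ n + ω ^ (-n) = ω ^ (n % 5) + ω ^ (-(n % 5)) := by
    rw [← conj_ω_zpow n, ω_zpow_emod n, conj_ω_zpow]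
  have hcast : ((n : ZMod 5)) = ((n % 5 : ℤ) : ZMod 5) :=
    ((ZMod.intCast_eq_intCast_iff _ _ _).2 (Int.emod_emod_of_dvd n dvd_rfl)).symm
  rw [hne]
  simp only [μ]
  rw [hcast]
  have h0 : 0 ≤ n % 5 := Int.emod_nonneg n (by norm_num)
  have h5 : n % 5 < 5 := Int.emod_lt_of_pos n (by norm_num)
  have hs := sqrt5_sq
  interval_cases h : (n % 5)
  · rw [hval (0:ℤ) 0 (by norm_num) 1 (by norm_num)]
    rw [if_pos (by decide : (((0:ℤ)) : ZMod 5) = 0)]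
    have : (1:ℝ) = a₀ + a₁ * (2 * 1) := by unfold a₀ a₁; nlinarith
    exact_mod_cast this
  · rw [hval (1:ℤ) 1 (by norm_num) ((Real.sqrt 5 - 1)/4)
      (by rw [show ((1:ℕ):ℝ) * (2 * Real.pi / 5) = 2 * Real.pi / 5 by push_cast; ring]
          exact cos_two_pi_div_five)]
    rw [if_neg (by decide : ¬ (((1:ℤ)) : ZMod 5) = 0),
      if_pos (by decide : (((1:ℤ)) : ZMod 5) = 1 ∨ (((1:ℤ)) : ZMod 5) = -1)]
    have : (Real.sqrt 5 - 1) / 2 = a₀ + a₁ * (2 * ((Real.sqrt 5 - 1)/4)) := by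
      unfold a₀ a₁; nlinarith
    exact_mod_cast this
  · rw [hval (2:ℤ) 2 (by norm_num) (-(1 + Real.sqrt 5)/4)
      (by rw [show ((2:ℕ):ℝ) * (2 * Real.pi / 5) = 4 * Real.pi / 5 by push_cast; ring]
          exact cos_four_pi_div_five)]
    rw [if_neg (by decide : ¬ (((2:ℤ)) : ZMod 5) = 0),
      if_neg (by decide : ¬ ((((2:ℤ)) : ZMod 5) = 1 ∨ (((2:ℤ)) : ZMod 5) = -1))]
    have : (0:ℝ) = a₀ + a₁ * (2 * (-(1 + Real.sqrt 5)/4)) := by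
      unfold a₀ a₁; nlinarith
    exact_mod_cast this
  · rw [hval (3:ℤ) 3 (by norm_num) (-(1 + Real.sqrt 5)/4)
      (by rw [show ((3:ℕ):ℝ) * (2 * Real.pi / 5) = 6 * Real.pi / 5 by push_cast; ring]
          exact cos_six_pi_div_five)]
    rw [if_neg (by decide : ¬ (((3:ℤ)) : ZMod 5) = 0),
      if_neg (by decide : ¬ ((((3:ℤ)) : ZMod 5) = 1 ∨ (((3:ℤ)) : ZMod 5) = -1))]
    have : (0:ℝ) = a₀ + a₁ * (2 * (-(1 + Real.sqrt 5)/4)) := by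
      unfold a₀ a₁; nlinarith
    exact_mod_cast this
  · rw [hval (4:ℤ) 4 (by norm_num) ((Real.sqrt 5 - 1)/4)
      (by rw [show ((4:ℕ):ℝ) * (2 * Real.pi / 5) = 8 * Real.pi / 5 by push_cast; ring]
          exact cos_eight_pi_div_five)]
    rw [if_neg (by decide : ¬ (((4:ℤ)) : ZMod 5) = 0),
      if_pos (by decide : (((4:ℤ)) : ZMod 5) = 1 ∨ (((4:ℤ)) : ZMod 5) = -1)]
    have : (Real.sqrt 5 - 1) / 2 = a₀ + a₁ * (2 * ((Real.sqrt 5 - 1)/4)) := by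
      unfold a₀ a₁; nlinarith
    exact_mod_cast this

end MuPD

theorem mu_isPosDef : IsPosDef μ := by
  intro N x c
  classical
  set S₀ : ℂ := ∑ i, c i with hS₀
  set S₁ : ℂ := ∑ i, c i * MuPD.ω ^ (x i) with hS₁
  set S₂ : ℂ := ∑ i, c i * MuPD.ω ^ (-(x i)) with hS₂
  have hterm : ∀ i j : Fin N, c i * (starRingEnd ℂ) (c j) * (μ (x i - x j) : ℂ)
      = (MuPD.a₀ : ℂ) * (c i * (starRingEnd ℂ) (c j))
        + (MuPD.a₁ : ℂ) * ((c i * MuPD.ω ^ (x i)) * (starRingEnd ℂ) (c j * MuPD.ω ^ (x j)))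
        + (MuPD.a₁ : ℂ) * ((c i * MuPD.ω ^ (-(x i))) * (starRingEnd ℂ) (c j * MuPD.ω ^ (-(x j)))) := by
    intro i j
    rw [MuPD.key, map_mul, map_mul, MuPD.conj_ω_zpow, MuPD.conj_ω_zpow, neg_neg,
      zpow_sub₀ MuPD.ω_ne_zero, neg_sub, zpow_sub₀ MuPD.ω_ne_zero, zpow_neg, zpow_neg]
    have hi := zpow_ne_zero (x i) MuPD.ω_ne_zero
    have hj := zpow_ne_zero (x j) MuPD.ω_ne_zero
    field_simp
    ring
  have hsum : ∑ i, ∑ j, c i * (starRingEnd ℂ) (c j) * (μ (x i - x j) : ℂ)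
      = (MuPD.a₀ : ℂ) * (S₀ * (starRingEnd ℂ) S₀)
        + (MuPD.a₁ : ℂ) * (S₁ * (starRingEnd ℂ) S₁)
        + (MuPD.a₁ : ℂ) * (S₂ * (starRingEnd ℂ) S₂) := by
    rw [hS₀, hS₁, hS₂, map_sum, map_sum, map_sum, Finset.sum_mul_sum, Finset.sum_mul_sum,
      Finset.sum_mul_sum]
    simp only [Finset.mul_sum, ← Finset.sum_add_distrib]
    exact Finset.sum_congr rfl fun i _ => Finset.sum_congr rfl fun j _ => hterm i j
  rw [hsum, Complex.mul_conj, Complex.mul_conj, Complex.mul_conj,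
    ← Complex.ofReal_mul, ← Complex.ofReal_mul, ← Complex.ofReal_mul,
    ← Complex.ofReal_add, ← Complex.ofReal_add]
  rw [Complex.zero_le_real]
  have h0 := Complex.normSq_nonneg S₀
  have h1 := Complex.normSq_nonneg S₁
  have h2 := Complex.normSq_nonneg S₂
  have ha0 := MuPD.a₀_nonneg
  have ha1 := MuPD.a₁_nonneg
  positivity
end

section
/- The function W is stable: for every finite Borel measure ρ on ℝ, the double integral ∫∫ W (x - y) dρ(x) dρ(y) is ≥ 0. -/
open Finset MeasureTheory Filter Topology Set Function
open scoped ENNReal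

noncomputable def ee (b : ℤ → ℝ) (j : ℤ) : ℝ := b j * (b j - 2 * b (j+1) + 2 * b (j+2))

lemma arith (a p r D : ℝ) (ha : 0 ≤ a) (hp : 0 ≤ p) (hr : 0 ≤ r)
    (hD : (max (p - r) 0)^2 ≤ D) : (max (a - p) 0)^2 ≤ D + a * (a - 2*p + 2*r) := by
  rcases le_total (p - r) 0 with h1 | h1 <;>
  rcases le_total (a - p) 0 with h2 | h2
  · rw [max_eq_right h2]; rw [max_eq_right h1] at hD; nlinarith
  · rw [max_eq_left h2]; rw [max_eq_right h1] at hD; nlinarith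
  · rw [max_eq_right h2]; rw [max_eq_left h1] at hD; nlinarith [sq_nonneg (a - (p - r))]
  · rw [max_eq_left h2]; rw [max_eq_left h1] at hD; nlinarith [sq_nonneg (a - (p - r))]

lemma key_finite : ∀ (N : ℕ) (k : ℤ) (b : ℤ → ℝ), (∀ j, 0 ≤ b j) →
    (∀ j, b j ≠ 0 → k ≤ j ∧ j < k + N) →
    (max (b k - b (k+1)) 0)^2 ≤ ∑ᶠ j, ee b j := by
  intro N
  induction N with
  | zero =>
    intro k b h0 hs
    have hb : ∀ j, b j = 0 := by
      intro j; by_contra h; have := hs j h; omega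
    have h1 : ∀ j, ee b j = 0 := by intro j; simp [ee, hb]
    simp [hb, h1, finsum_zero]
  | succ N ih =>
    intro k b h0 hs
    set b' := Function.update b k 0 with hb'
    have hb'j : ∀ j, j ≠ k → b' j = b j := fun j hj => Function.update_of_ne hj _ _
    have hb'k : b' k = 0 := Function.update_self _ _ _
    have h0' : ∀ j, 0 ≤ b' j := by
      intro j; rcases eq_or_ne j k with rfl | h; · rw [hb'k]
      · rw [hb'j j h]; exact h0 j
    have hs' : ∀ j, b' j ≠ 0 → (k+1) ≤ j ∧ j < (k+1) + N := by
      intro j hj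
      have hjk : j ≠ k := by rintro rfl; exact hj hb'k
      rw [hb'j j hjk] at hj
      have := hs j hj; omega
    have hlow : ∀ j, j < k → b j = 0 := by
      intro j hj; by_contra h; have := hs j h; omega
    have hee : ∀ j, j ≠ k → ee b j = ee b' j := by
      intro j hj
      rcases lt_or_gt_of_ne hj with h | h
      · have h1 : b j = 0 := hlow j h
        have h2 : b' j = 0 := by rw [hb'j j hj, h1]
        simp [ee, h1, h2]
      · have e1 : b' j = b j := hb'j j hj
        have e2 : b' (j+1) = b (j+1) := hb'j _ (by omega)
        have e3 : b' (j+2) = b (j+2) := hb'j _ (by omega)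
        simp [ee, e1, e2, e3]
    -- finsum over the finset Icc k (k+N)
    have hsupp : Function.support (ee b) ⊆ ↑(Finset.Icc k (k + N)) := by
      intro j hj
      have hbj : b j ≠ 0 := by
        intro h; apply hj; simp [ee, h]
      have := hs j hbj
      simp only [Finset.coe_Icc, Set.mem_Icc]; omega
    have hsupp' : Function.support (ee b') ⊆ ↑(Finset.Icc k (k + N)) := by
      intro j hj
      have hbj : b' j ≠ 0 := by
        intro h; apply hj; simp [ee, h]
      have := hs' j hbj
      simp only [Finset.coe_Icc, Set.mem_Icc]; omega
    rw [finsum_eq_sum_of_support_subset _ hsupp]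
    have hQ' := ih (k+1) b' h0' hs'
    rw [finsum_eq_sum_of_support_subset _ hsupp'] at hQ'
    have hdiff : ∑ j ∈ Finset.Icc k (k + (N:ℤ)), ee b j
        = (∑ j ∈ Finset.Icc k (k + (N:ℤ)), ee b' j) + ee b k := by
      have h2 : ee b' k = 0 := by simp [ee, hb'k]
      have hone : ∑ j ∈ Finset.Icc k (k + (N:ℤ)), (ee b j - ee b' j) = ee b k - ee b' k := by
        apply Finset.sum_eq_single
        · intro j _ hj; rw [hee j hj]; ring
        · intro h; exact absurd (Finset.mem_Icc.2 ⟨le_refl k, by omega⟩) h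
      rw [Finset.sum_sub_distrib] at hone
      linarith [hone]
    rw [hdiff]
    have e2 : b' (k+1) = b (k+1) := hb'j _ (by omega)
    have e3 : b' (k+1+1) = b (k+2) := by rw [hb'j _ (by omega)]; congr 1; ring
    have harith := arith (b k) (b (k+1)) (b (k+2)) (∑ j ∈ Finset.Icc k (k + (N:ℤ)), ee b' j)
      (h0 k) (h0 (k+1)) (h0 (k+2)) (by rw [e2, e3] at hQ'; exact hQ')
    calc (max (b k - b (k+1)) 0)^2
        ≤ _ + b k * (b k - 2*b (k+1) + 2*b (k+2)) := harith
      _ = _ + ee b k := by rfl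

lemma shift_summable (b : ℤ → ℝ) (h0 : ∀ j, 0 ≤ b j) (hsq : Summable fun j => b j * b j)
    (k : ℤ) : Summable fun j => b j * b (j + k) := by
  have h1 : Summable fun j => b (j + k) * b (j + k) := hsq.comp_injective (add_left_injective k)
  apply Summable.of_nonneg_of_le (fun j => mul_nonneg (h0 j) (h0 _)) (fun j => ?_) (hsq.add h1)
  nlinarith [sq_nonneg (b j - b (j+k)), h0 j, h0 (j+k)]

lemma sum_trunc_tendsto (g : ℤ → ℝ) (hg : Summable g) (k : ℤ) :
    Tendsto (fun M : ℕ => ∑ j ∈ Finset.Icc (-(M:ℤ)) ((M:ℤ)-k), g j) atTop (𝓝 (∑' j, g j)) := by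
  apply (hg.hasSum).comp
  apply tendsto_atTop_finset_of_monotone
  · intro M M' h
    have : (M:ℤ) ≤ (M':ℤ) := by exact_mod_cast h
    apply Finset.Icc_subset_Icc <;> omega
  · intro x
    refine ⟨x.natAbs + k.natAbs, ?_⟩
    simp only [Finset.mem_Icc]
    omega

lemma key_l2 (b : ℤ → ℝ) (h0 : ∀ j, 0 ≤ b j) (hsq : Summable fun j => b j * b j) :
    0 ≤ (∑' j, b j * b j) - 2 * (∑' j, b j * b (j+1)) + 2 * (∑' j, b j * b (j+2)) := by
  have hs1 := shift_summable b h0 hsq 1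
  have hs2 := shift_summable b h0 hsq 2
  have hsq' : Summable fun j : ℤ => b j * b (j + 0) := by simpa using hsq
  have t0 := sum_trunc_tendsto _ hsq' 0
  have t1 := sum_trunc_tendsto _ hs1 1
  have t2 := sum_trunc_tendsto _ hs2 2
  have htT : Tendsto (fun M : ℕ =>
      (∑ j ∈ Finset.Icc (-(M:ℤ)) ((M:ℤ)-0), b j * b (j+0))
      - 2 * (∑ j ∈ Finset.Icc (-(M:ℤ)) ((M:ℤ)-1), b j * b (j+1))
      + 2 * (∑ j ∈ Finset.Icc (-(M:ℤ)) ((M:ℤ)-2), b j * b (j+2))) atTop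
      (𝓝 ((∑' j, b j * b (j+0)) - 2 * (∑' j, b j * b (j+1)) + 2 * (∑' j, b j * b (j+2)))) :=
    ((t0.sub (t1.const_mul 2)).add (t2.const_mul 2))
  have hT0 : ∀ M : ℕ, 0 ≤ (∑ j ∈ Finset.Icc (-(M:ℤ)) ((M:ℤ)-0), b j * b (j+0))
      - 2 * (∑ j ∈ Finset.Icc (-(M:ℤ)) ((M:ℤ)-1), b j * b (j+1))
      + 2 * (∑ j ∈ Finset.Icc (-(M:ℤ)) ((M:ℤ)-2), b j * b (j+2)) := by
    intro M
    set bM : ℤ → ℝ := fun j => if -(M:ℤ) ≤ j ∧ j ≤ (M:ℤ) then b j else 0 with hbM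
    have hbM0 : ∀ j, 0 ≤ bM j := by
      intro j; by_cases h : -(M:ℤ) ≤ j ∧ j ≤ (M:ℤ) <;> simp [hbM, h, h0 j]
    have hbMs : ∀ j, bM j ≠ 0 → -(M:ℤ) ≤ j ∧ j < -(M:ℤ) + (2*M+1 : ℕ) := by
      intro j hj
      by_cases h : -(M:ℤ) ≤ j ∧ j ≤ (M:ℤ)
      · push_cast; omega
      · exact absurd (by simp [hbM, h]) hj
    have hkey := key_finite (2*M+1) (-(M:ℤ)) bM hbM0 hbMs
    have hle : (0:ℝ) ≤ ∑ᶠ j, ee bM j := le_trans (sq_nonneg _) hkey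
    have hsupp : Function.support (ee bM) ⊆ ↑(Finset.Icc (-(M:ℤ)) (M:ℤ)) := by
      intro j hj
      rw [Function.mem_support] at hj
      by_contra h
      apply hj
      have h' : ¬(-(M:ℤ) ≤ j ∧ j ≤ (M:ℤ)) := by
        simpa [Finset.coe_Icc, Set.mem_Icc] using h
      simp [ee, hbM, h']
    rw [finsum_eq_sum_of_support_subset _ hsupp] at hle
    have expand : ∀ j ∈ Finset.Icc (-(M:ℤ)) (M:ℤ),
        ee bM j = bM j * bM j - 2 * (bM j * bM (j+1)) + 2 * (bM j * bM (j+2)) := by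
      intro j _; simp only [ee]; ring
    rw [Finset.sum_congr rfl expand, Finset.sum_add_distrib, Finset.sum_sub_distrib,
      ← Finset.mul_sum, ← Finset.mul_sum] at hle
    have e0 : ∑ j ∈ Finset.Icc (-(M:ℤ)) (M:ℤ), bM j * bM j
        = ∑ j ∈ Finset.Icc (-(M:ℤ)) ((M:ℤ)-0), b j * b (j+0) := by
      rw [show (M:ℤ) - 0 = (M:ℤ) by ring]
      apply Finset.sum_congr rfl
      intro j hj
      rw [Finset.mem_Icc] at hj
      rw [show j + (0:ℤ) = j by ring]
      simp [hbM, hj]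
    have e1 : ∑ j ∈ Finset.Icc (-(M:ℤ)) (M:ℤ), bM j * bM (j+1)
        = ∑ j ∈ Finset.Icc (-(M:ℤ)) ((M:ℤ)-1), b j * b (j+1) := by
      have hsub : Finset.Icc (-(M:ℤ)) ((M:ℤ)-1) ⊆ Finset.Icc (-(M:ℤ)) (M:ℤ) :=
        Finset.Icc_subset_Icc le_rfl (by omega)
      rw [← Finset.sum_subset hsub (fun j hjt hjs => ?_)]
      · apply Finset.sum_congr rfl
        intro j hj
        simp only [Finset.mem_Icc] at hj
        have p1 : -(M:ℤ) ≤ j ∧ j ≤ (M:ℤ) := ⟨hj.1, by omega⟩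
        have p2 : -(M:ℤ) ≤ j+1 ∧ j+1 ≤ (M:ℤ) := ⟨by omega, by omega⟩
        simp [hbM, p1, p2]
      · simp only [Finset.mem_Icc] at hjt hjs
        have hj1 : ¬(-(M:ℤ) ≤ j + 1 ∧ j + 1 ≤ (M:ℤ)) := by omega
        simp [hbM, hj1]
        intros; exfalso; omega
    have e2 : ∑ j ∈ Finset.Icc (-(M:ℤ)) (M:ℤ), bM j * bM (j+2)
        = ∑ j ∈ Finset.Icc (-(M:ℤ)) ((M:ℤ)-2), b j * b (j+2) := by
      have hsub : Finset.Icc (-(M:ℤ)) ((M:ℤ)-2) ⊆ Finset.Icc (-(M:ℤ)) (M:ℤ) :=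
        Finset.Icc_subset_Icc le_rfl (by omega)
      rw [← Finset.sum_subset hsub (fun j hjt hjs => ?_)]
      · apply Finset.sum_congr rfl
        intro j hj
        simp only [Finset.mem_Icc] at hj
        have p1 : -(M:ℤ) ≤ j ∧ j ≤ (M:ℤ) := ⟨hj.1, by omega⟩
        have p2 : -(M:ℤ) ≤ j+2 ∧ j+2 ≤ (M:ℤ) := ⟨by omega, by omega⟩
        simp [hbM, p1, p2]
      · simp only [Finset.mem_Icc] at hjt hjs
        have hj2 : ¬(-(M:ℤ) ≤ j + 2 ∧ j + 2 ≤ (M:ℤ)) := by omega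
        simp [hbM, hj2]
    rw [e0, e1, e2] at hle
    linarith
  have hlim := ge_of_tendsto' htT hT0
  have heq : (∑' j : ℤ, b j * b (j+0)) = ∑' j : ℤ, b j * b j :=
    tsum_congr (fun j => by norm_num)
  linarith

lemma amgm_ennreal (a b : ℝ≥0∞) : a * b ≤ a * a + b * b := by
  rcases le_total a b with h | h
  · calc a * b ≤ b * b := mul_le_mul_left h b
    _ ≤ a * a + b * b := le_add_self
  · calc a * b ≤ a * a := mul_le_mul_right h a
    _ ≤ a * a + b * b := le_self_add

lemma shift_tsum_sq (b : ℤ → ℝ≥0∞) (k : ℤ) :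
    (∑' j, b (j + k) * b (j + k)) = ∑' j, b j * b j :=
  (Equiv.addRight k).tsum_eq (fun j => b j * b j)

lemma prod_tsum_ne_top (b : ℤ → ℝ≥0∞) (h0 : (∑' j, b j * b j) ≠ ⊤) (k : ℤ) :
    (∑' j, b j * b (j + k)) ≠ ⊤ := by
  have hle : (∑' j, b j * b (j + k)) ≤ ∑' j, (b j * b j + b (j+k) * b (j+k)) :=
    Summable.tsum_le_tsum (fun j => amgm_ennreal _ _) ENNReal.summable ENNReal.summable
  rw [ENNReal.tsum_add, shift_tsum_sq] at hle
  exact ne_top_of_le_ne_top (by simp [h0, ENNReal.add_ne_top]) hle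

lemma slice_ineq (b : ℤ → ℝ≥0∞) (hfin : ∀ j, b j ≠ ⊤) :
    2 * ∑' j, b j * b (j+1) ≤ (∑' j, b j * b j) + 2 * ∑' j, b j * b (j+2) := by
  by_cases h0 : (∑' j, b j * b j) = ⊤
  · rw [h0, top_add]; exact le_top
  · have h1 := prod_tsum_ne_top b h0 1
    have h2 := prod_tsum_ne_top b h0 2
    set β : ℤ → ℝ := fun j => (b j).toReal with hβ
    have hβ0 : ∀ j, 0 ≤ β j := fun j => ENNReal.toReal_nonneg
    have hsum : Summable fun j => β j * β j := by
      have := ENNReal.summable_toReal h0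
      simpa [ENNReal.toReal_mul] using this
    have et : ∀ k : ℤ, (∑' j, b j * b (j + k)).toReal = ∑' j, β j * β (j + k) := by
      intro k
      rw [ENNReal.tsum_toReal_eq (fun j => ENNReal.mul_ne_top (hfin j) (hfin _))]
      simp [ENNReal.toReal_mul]; rfl
    have et0 : (∑' j, b j * b j).toReal = ∑' j, β j * β j := by
      rw [ENNReal.tsum_toReal_eq (fun j => ENNReal.mul_ne_top (hfin j) (hfin _))]
      simp [ENNReal.toReal_mul]; rfl
    have hkey := key_l2 β hβ0 hsum
    rw [← ENNReal.toReal_le_toReal (by exact ENNReal.mul_ne_top (by simp) h1)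
      (by exact ENNReal.add_ne_top.2 ⟨h0, ENNReal.mul_ne_top (by simp) h2⟩)]
    rw [ENNReal.toReal_mul, ENNReal.toReal_add h0 (ENNReal.mul_ne_top (by simp) h2),
      ENNReal.toReal_mul, et, et, et0]
    norm_num
    linarith

lemma reindex_corr (b : ℤ → ℝ≥0∞) (k : ℤ) :
    (∑' j, b j * b (j - k)) = ∑' j, b j * b (j + k) := by
  have h1 : (∑' j : ℤ, b (j + k) * b (j + k - k)) = ∑' j, b j * b (j - k) :=
    (Equiv.addRight k).tsum_eq (fun j => b j * b (j - k))
  rw [← h1]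
  apply tsum_congr; intro j
  rw [add_sub_cancel_right, mul_comm]

lemma final_ineq (φ : ℝ → ℝ) (hc : Continuous φ) (h0 : ∀ s, 0 ≤ φ s)
    (hL : (∫⁻ t, ENNReal.ofReal (φ t)) ≠ ⊤) (C : ℝ) (hC : ∀ s, φ s ≤ C) :
    2 * (∫ t, φ t * φ (t - 1)) ≤ (∫ t, φ t * φ t) + 2 * ∫ t, φ t * φ (t - 2) := by
  set H : ℝ → ℝ≥0∞ := fun t => ENNReal.ofReal (φ t) with hH
  have hHm : Measurable H := ENNReal.measurable_ofReal.comp hc.measurable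
  set L : ℝ → ℝ≥0∞ := fun k => ∫⁻ t, H t * H (t - k) with hLdef
  have hint : ∀ k : ℝ, (∫ t, φ t * φ (t - k)) = (L k).toReal := by
    intro k
    rw [integral_eq_lintegral_of_nonneg_ae (ae_of_all _ fun t => mul_nonneg (h0 t) (h0 _))
      (Continuous.aestronglyMeasurable (by fun_prop : Continuous fun t : ℝ => φ t * φ (t - k)))]
    congr 1
    apply lintegral_congr; intro t
    exact ENNReal.ofReal_mul (h0 t)
  have hint0 : (∫ t, φ t * φ t) = (L 0).toReal := by
    rw [← hint 0]
    congr 1; funext t; rw [sub_zero]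
  have htrans : ∀ k : ℝ, (∫⁻ t, H (t - k)) = ∫⁻ t, H t := by
    intro k
    simpa [sub_eq_add_neg] using lintegral_add_right_eq_self (fun t => H t) (-k)
  have hLfin : ∀ k : ℝ, L k ≠ ⊤ := by
    intro k
    have hb : ∀ t, H t * H (t - k) ≤ ENNReal.ofReal C * H (t - k) := fun t =>
      mul_le_mul_left (ENNReal.ofReal_le_ofReal (hC t)) _
    have hl : L k ≤ ENNReal.ofReal C * ∫⁻ t, H (t - k) := by
      rw [← lintegral_const_mul' _ _ ENNReal.ofReal_ne_top]
      exact lintegral_mono hb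
    rw [htrans k] at hl
    exact ne_top_of_le_ne_top (ENNReal.mul_ne_top ENNReal.ofReal_ne_top hL) hl
  have hmeas : ∀ k : ℤ, ∀ j : ℤ, Measurable fun x : ℝ => H (x + (j:ℝ)) * H (x + (j:ℝ) - (k:ℝ)) := by
    intro k j
    exact (hHm.comp (measurable_id.add_const _)).mul
      (hHm.comp ((measurable_id.add_const _).sub_const _))
  have hslice : ∀ k : ℤ, L (k:ℝ) = ∫⁻ x in Ioc (0:ℝ) 1,
      ∑' j : ℤ, H (x + (j:ℝ)) * H (x + (j:ℝ) - (k:ℝ)) := by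
    intro k
    have h1 : L (k:ℝ) = ∫⁻ t in ⋃ j : ℤ, Ioc (j:ℝ) ((j:ℝ)+1), H t * H (t - (k:ℝ)) := by
      rw [iUnion_Ioc_intCast ℝ, Measure.restrict_univ]
    rw [h1, lintegral_iUnion (fun j => measurableSet_Ioc) (pairwise_disjoint_Ioc_intCast ℝ)]
    have h2 : ∀ j : ℤ, (∫⁻ t in Ioc ((j:ℝ)) ((j:ℝ)+1), H t * H (t - (k:ℝ)))
        = ∫⁻ x in Ioc (0:ℝ) 1, H (x + (j:ℝ)) * H (x + (j:ℝ) - (k:ℝ)) := by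
      intro j
      have hmp := (measurePreserving_add_right volume (j:ℝ)).setLIntegral_comp_preimage_emb
        (measurableEmbedding_addRight (j:ℝ)) (fun t => H t * H (t - (k:ℝ))) (Ioc ((j:ℝ)) ((j:ℝ)+1))
      rw [← hmp]
      have hpre : (fun x : ℝ => x + (j:ℝ)) ⁻¹' (Ioc ((j:ℝ)) ((j:ℝ)+1)) = Ioc (0:ℝ) 1 := by
        ext x
        simp only [Set.mem_preimage, Set.mem_Ioc]
        constructor <;> intro hx <;> exact ⟨by linarith [hx.1], by linarith [hx.2]⟩
      rw [hpre]
    rw [tsum_congr h2, ← lintegral_tsum (fun j => (hmeas k j).aemeasurable)]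
  have hE : 2 * L ((1:ℤ):ℝ) ≤ L ((0:ℤ):ℝ) + 2 * L ((2:ℤ):ℝ) := by
    rw [hslice 0, hslice 1, hslice 2,
      ← lintegral_const_mul' 2 _ (by simp), ← lintegral_const_mul' 2 _ (by simp),
      ← lintegral_add_left (Measurable.ennreal_tsum (hmeas 0))]
    apply lintegral_mono
    intro x
    dsimp only
    set b : ℤ → ℝ≥0∞ := fun j => H (x + (j:ℝ)) with hbdef
    have hbfin : ∀ j, b j ≠ ⊤ := fun j => ENNReal.ofReal_ne_top
    have harg : ∀ j m : ℤ, H (x + (j:ℝ) - (m:ℝ)) = b (j - m) := by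
      intro j m
      simp only [hbdef]
      congr 1
      push_cast
      ring
    have e0 : ∀ j : ℤ, H (x + (j:ℝ)) * H (x + (j:ℝ) - ((0:ℤ):ℝ)) = b j * b j := by
      intro j; rw [harg j 0, sub_zero]
    have e1 : ∀ j : ℤ, H (x + (j:ℝ)) * H (x + (j:ℝ) - ((1:ℤ):ℝ)) = b j * b (j - 1) := by
      intro j; rw [harg j 1]
    have e2 : ∀ j : ℤ, H (x + (j:ℝ)) * H (x + (j:ℝ) - ((2:ℤ):ℝ)) = b j * b (j - 2) := by
      intro j; rw [harg j 2]
    rw [tsum_congr e0, tsum_congr e1, tsum_congr e2, reindex_corr b 1, reindex_corr b 2]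
    exact slice_ineq b hbfin
  have h2fin : (2 : ℝ≥0∞) * L ((1:ℤ):ℝ) ≠ ⊤ := ENNReal.mul_ne_top (by simp) (hLfin _)
  have hrfin : L ((0:ℤ):ℝ) + 2 * L ((2:ℤ):ℝ) ≠ ⊤ :=
    ENNReal.add_ne_top.2 ⟨hLfin _, ENNReal.mul_ne_top (by simp) (hLfin _)⟩
  have := (ENNReal.toReal_le_toReal h2fin hrfin).2 hE
  rw [ENNReal.toReal_mul, ENNReal.toReal_add (hLfin _) (ENNReal.mul_ne_top (by simp) (hLfin _)),
    ENNReal.toReal_mul] at this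
  simp only [Int.cast_zero, Int.cast_one, Int.cast_ofNat] at this
  rw [hint 1, hint 2, hint0]
  simp only [ENNReal.toReal_ofNat] at this
  convert this using 3

lemma swap_nonneg {μ ν : Measure ℝ} [SFinite μ] [SFinite ν] (F : ℝ → ℝ → ℝ)
    (hF : Continuous (Function.uncurry F)) (h0 : ∀ x y, 0 ≤ F x y)
    (h1 : ∀ x, Integrable (F x) ν) (h2 : ∀ y, Integrable (fun x => F x y) μ) :
    ∫ x, (∫ y, F x y ∂ν) ∂μ = ∫ y, (∫ x, F x y ∂μ) ∂ν := by
  have hm : Measurable (fun p : ℝ × ℝ => ENNReal.ofReal (F p.1 p.2)) :=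
    ENNReal.measurable_ofReal.comp hF.measurable
  have hm' : Measurable (fun p : ℝ × ℝ => ENNReal.ofReal (F p.2 p.1)) :=
    ENNReal.measurable_ofReal.comp (hF.measurable.comp measurable_swap)
  have e1 : ∀ x, ∫ y, F x y ∂ν = (∫⁻ y, ENNReal.ofReal (F x y) ∂ν).toReal := fun x =>
    integral_eq_lintegral_of_nonneg_ae (ae_of_all _ (h0 x))
      (hF.comp (Continuous.prodMk_right x)).aestronglyMeasurable
  have e2 : ∀ y, ∫ x, F x y ∂μ = (∫⁻ x, ENNReal.ofReal (F x y) ∂μ).toReal := fun y =>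
    integral_eq_lintegral_of_nonneg_ae (ae_of_all _ (fun x => h0 x y))
      (hF.comp (continuous_id.prodMk continuous_const)).aestronglyMeasurable
  simp_rw [e1, e2]
  rw [integral_toReal (hm.lintegral_prod_right').aemeasurable
      (ae_of_all _ (fun x => (h1 x).lintegral_lt_top)),
    integral_toReal (hm'.lintegral_prod_right').aemeasurable
      (ae_of_all _ (fun y => (h2 y).lintegral_lt_top)),
    lintegral_lintegral_swap hm.aemeasurable]

-- convolution with a finite measure is continuous
lemma cont_conv_meas (ρ : Measure ℝ) [IsFiniteMeasure ρ] (ψ : ℝ → ℝ)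
    (hc : Continuous ψ) (hs : HasCompactSupport ψ) :
    Continuous fun x => ∫ y, ψ (x - y) ∂ρ := by
  have h1 : Continuous (convolution (fun _ => (1:ℝ)) ψ (ContinuousLinearMap.lsmul ℝ ℝ) ρ) :=
    HasCompactSupport.continuous_convolution_right _ hs (integrable_const 1).locallyIntegrable hc
  have : (convolution (fun _ => (1:ℝ)) ψ (ContinuousLinearMap.lsmul ℝ ℝ) ρ)
      = fun x => ∫ y, ψ (x - y) ∂ρ := by
    funext x
    simp [MeasureTheory.convolution]
  rwa [this] at h1

lemma integrable_of_bdd_cont (ρ : Measure ℝ) [IsFiniteMeasure ρ] (φ : ℝ → ℝ) (C : ℝ)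
    (hφ : Continuous φ) (hC : ∀ x, |φ x| ≤ C) : Integrable φ ρ :=
  (integrable_const C).mono' hφ.aestronglyMeasurable (ae_of_all _ (by simpa using hC))

theorem W_isStable (f : ℝ → ℝ) (hf_cont : Continuous f) (hf_pos : ∀ x, 0 ≤ f x)
    (hf_supp : Function.support f ⊆ Set.Ioo (-(1/2) : ℝ) (1/2))
    (W : ℝ → ℝ)
    (hW : W = fun x => ∑ᶠ n : ℤ, V n * ∫ y : ℝ, f (n - x + y) * f y) :
    ∀ ρ : Measure ℝ, IsFiniteMeasure ρ →
      0 ≤ ∫ x : ℝ, (∫ y : ℝ, W (x - y) ∂ρ) ∂ρ := by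
  intro ρ hρ
  classical
  -- basic facts about f
  have hfz : ∀ x : ℝ, x ∉ Icc (-(1/2) : ℝ) (1/2) → f x = 0 := by
    intro x hx
    by_contra hfx
    exact hx (Ioo_subset_Icc_self (hf_supp hfx))
  have hfcs : HasCompactSupport f := HasCompactSupport.intro isCompact_Icc hfz
  have hfI : Integrable f (volume : Measure ℝ) := hf_cont.integrable_of_hasCompactSupport hfcs
  obtain ⟨x₀, hx₀⟩ := hf_cont.exists_forall_ge_of_hasCompactSupport hfcs
  set M : ℝ := f x₀ with hMdef
  have hM0 : 0 ≤ M := hf_pos x₀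
  have hMb : ∀ x, f x ≤ M := hx₀
  -- the autocorrelation g
  set g : ℝ → ℝ := fun u => ∫ t, f (u + t) * f t with hgdef
  have hgint : ∀ u : ℝ, Integrable (fun t => f (u + t) * f t) (volume : Measure ℝ) := by
    intro u
    apply Continuous.integrable_of_hasCompactSupport
    · exact (hf_cont.comp (continuous_const.add continuous_id)).mul hf_cont
    · exact hfcs.mul_left
  have hg0 : ∀ u, 0 ≤ g u := fun u =>
    integral_nonneg fun t => mul_nonneg (hf_pos _) (hf_pos _)
  set Cg : ℝ := M * ∫ t, f t with hCgdef
  have hgb : ∀ u, g u ≤ Cg := by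
    intro u
    calc g u ≤ ∫ t, M * f t := by
          apply integral_mono (hgint u) (hfI.const_mul M)
          intro t
          exact mul_le_mul_of_nonneg_right (hMb _) (hf_pos t)
      _ = Cg := by rw [integral_const_mul]
  have hgabs : ∀ u, |g u| ≤ Cg := fun u => by
    rw [abs_of_nonneg (hg0 u)]; exact hgb u
  have hgz : ∀ u : ℝ, u ∉ Icc (-1 : ℝ) 1 → g u = 0 := by
    intro u hu
    have : ∀ t : ℝ, f (u + t) * f t = 0 := by
      intro t
      by_cases hft : f t = 0
      · rw [hft, mul_zero]
      · have ht : t ∈ Ioo (-(1/2) : ℝ) (1/2) := hf_supp hft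
        have hut : u + t ∉ Icc (-(1/2) : ℝ) (1/2) := by
          simp only [Set.mem_Icc, Set.mem_Ioo, not_and_or, not_le] at hu ht ⊢
          rcases hu with h | h
          · left; linarith [ht.1]
          · right; linarith [ht.2]
        rw [hfz _ hut, zero_mul]
    simp only [hgdef]
    rw [show (fun t => f (u + t) * f t) = fun _ => (0:ℝ) from funext this]
    exact integral_zero _ _
  have hgcs : HasCompactSupport g := HasCompactSupport.intro isCompact_Icc hgz
  have hgc : Continuous g := by
    have h1 : Continuous (convolution f (fun v => f (-v))
        (ContinuousLinearMap.lsmul ℝ ℝ) volume) :=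
      HasCompactSupport.continuous_convolution_right _
        (hfcs.comp_homeomorph (Homeomorph.neg ℝ)) hfI.locallyIntegrable
        (hf_cont.comp continuous_neg)
    have h2 : (convolution f (fun v => f (-v)) (ContinuousLinearMap.lsmul ℝ ℝ) volume) = g := by
      funext x
      rw [convolution_def]
      simp only [ContinuousLinearMap.lsmul_apply, smul_eq_mul, neg_sub]
      rw [← integral_add_right_eq_self (fun t => f t * f (t - x)) x]
      simp only [hgdef]
      congr 1
      funext t
      rw [add_sub_cancel_right, add_comm, mul_comm]
    rwa [h2] at h1
  -- the smoothed density h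
  set φ : ℝ → ℝ := fun s => ∫ x, f (s - x) ∂ρ with hφdef
  have hφc : Continuous φ := cont_conv_meas ρ f hf_cont hfcs
  have hφ0 : ∀ s, 0 ≤ φ s := fun s => integral_nonneg fun x => hf_pos _
  set Cφ : ℝ := M * (ρ univ).toReal with hCφdef
  have hφb : ∀ s, φ s ≤ Cφ := by
    intro s
    have := norm_integral_le_of_norm_le_const (μ := ρ) (f := fun x => f (s - x)) (C := M)
      (ae_of_all _ fun x => by rw [Real.norm_eq_abs, abs_of_nonneg (hf_pos _)]; exact hMb _)
    calc φ s ≤ |φ s| := le_abs_self _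
      _ ≤ M * (ρ univ).toReal := by rw [← Real.norm_eq_abs]; exact this
  have hφabs : ∀ s, |φ s| ≤ Cφ := fun s => by
    rw [abs_of_nonneg (hφ0 s)]; exact hφb s
  -- h is "L¹"
  have hφL : (∫⁻ t, ENNReal.ofReal (φ t)) ≠ ⊤ := by
    have hswap : (∫⁻ t, ∫⁻ x, ENNReal.ofReal (f (t - x)) ∂ρ)
        = ∫⁻ x, (∫⁻ t, ENNReal.ofReal (f (t - x))) ∂ρ := by
      apply lintegral_lintegral_swap
      apply Measurable.aemeasurable
      apply ENNReal.measurable_ofReal.comp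
      exact (hf_cont.comp (continuous_fst.sub continuous_snd)).measurable
    have h1 : ∀ t : ℝ, ENNReal.ofReal (φ t) = ∫⁻ x, ENNReal.ofReal (f (t - x)) ∂ρ := by
      intro t
      apply ofReal_integral_eq_lintegral_ofReal
      · exact integrable_of_bdd_cont ρ _ M (hf_cont.comp (continuous_const.sub continuous_id))
          (fun x => by rw [abs_of_nonneg (hf_pos _)]; exact hMb _)
      · exact ae_of_all _ fun x => hf_pos _
    have h2 : ∀ x : ℝ, (∫⁻ t, ENNReal.ofReal (f (t - x))) = ∫⁻ t, ENNReal.ofReal (f t) := by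
      intro x
      simpa [sub_eq_add_neg] using
        lintegral_add_right_eq_self (fun t => ENNReal.ofReal (f t)) (-x)
    calc (∫⁻ t, ENNReal.ofReal (φ t))
        = ∫⁻ t, ∫⁻ x, ENNReal.ofReal (f (t - x)) ∂ρ := by
          apply lintegral_congr h1
      _ = ∫⁻ x, (∫⁻ t, ENNReal.ofReal (f (t - x))) ∂ρ := hswap
      _ = ∫⁻ _x, (∫⁻ t, ENNReal.ofReal (f t)) ∂ρ := by
          apply lintegral_congr h2
      _ = (∫⁻ t, ENNReal.ofReal (f t)) * ρ univ := lintegral_const _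
      _ ≠ ⊤ := ENNReal.mul_ne_top hfI.lintegral_lt_top.ne (measure_ne_top ρ _)
  -- Step B
  have hVz : ∀ n : ℤ, n ∉ Finset.Icc (-2:ℤ) 2 → V n = 0 := by
    intro n hn
    simp only [Finset.mem_Icc] at hn
    simp only [V]
    rw [if_neg (by omega), if_neg (by omega)]
  have hWsum : ∀ u : ℝ, W u = ∑ n ∈ Finset.Icc (-2:ℤ) 2, V n * g ((n:ℝ) - u) := by
    intro u
    rw [hW]
    simp only [hgdef]
    apply finsum_eq_sum_of_support_subset
    intro n hn
    simp only [Function.mem_support] at hn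
    by_contra hmem
    exact hn (by rw [hVz n hmem, zero_mul])
  have hginteg : ∀ c : ℝ, ∀ x : ℝ, Integrable (fun y : ℝ => g (c - (x - y))) ρ := by
    intro c x
    apply integrable_of_bdd_cont ρ _ Cg
    · exact hgc.comp (continuous_const.sub (continuous_const.sub continuous_id))
    · intro y; exact hgabs _
  have hinner : ∀ x : ℝ, ∫ y, W (x - y) ∂ρ
      = ∑ n ∈ Finset.Icc (-2:ℤ) 2, V n * ∫ y, g ((n:ℝ) - (x - y)) ∂ρ := by
    intro x
    calc ∫ y, W (x - y) ∂ρ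
        = ∫ y, (∑ n ∈ Finset.Icc (-2:ℤ) 2, V n * g ((n:ℝ) - (x - y))) ∂ρ :=
          integral_congr_ae (ae_of_all _ fun y => hWsum (x - y))
      _ = ∑ n ∈ Finset.Icc (-2:ℤ) 2, ∫ y, V n * g ((n:ℝ) - (x - y)) ∂ρ :=
          integral_finset_sum _ (fun n _ => (hginteg (n:ℝ) x).const_mul (V n))
      _ = ∑ n ∈ Finset.Icc (-2:ℤ) 2, V n * ∫ y, g ((n:ℝ) - (x - y)) ∂ρ :=
          Finset.sum_congr rfl fun n _ => integral_const_mul _ _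
  have hkcs : ∀ n : ℤ, HasCompactSupport fun v : ℝ => g ((n:ℝ) - v) := by
    intro n
    apply HasCompactSupport.intro (isCompact_Icc (a := (n:ℝ) - 1) (b := (n:ℝ) + 1))
    intro v hv
    apply hgz
    intro hmem
    apply hv
    simp only [Set.mem_Icc] at hmem ⊢
    constructor <;> linarith [hmem.1, hmem.2]
  have hkint : ∀ n : ℤ, Integrable (fun x => ∫ y, g ((n:ℝ) - (x - y)) ∂ρ) ρ := by
    intro n
    apply integrable_of_bdd_cont ρ _ (Cg * (ρ univ).toReal)
    · exact cont_conv_meas ρ (fun v => g ((n:ℝ) - v))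
        (hgc.comp (continuous_const.sub continuous_id)) (hkcs n)
    · intro x
      have hb := norm_integral_le_of_norm_le_const (μ := ρ)
        (f := fun y => g ((n:ℝ) - (x - y))) (C := Cg)
        (ae_of_all _ fun y => by rw [Real.norm_eq_abs]; exact hgabs _)
      rwa [Real.norm_eq_abs] at hb
  have houter : ∫ x, (∫ y, W (x - y) ∂ρ) ∂ρ
      = ∑ n ∈ Finset.Icc (-2:ℤ) 2, V n * ∫ x, (∫ y, g ((n:ℝ) - (x - y)) ∂ρ) ∂ρ :=
    calc ∫ x, (∫ y, W (x - y) ∂ρ) ∂ρ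
        = ∫ x, (∑ n ∈ Finset.Icc (-2:ℤ) 2, V n * ∫ y, g ((n:ℝ) - (x - y)) ∂ρ) ∂ρ :=
          integral_congr_ae (ae_of_all _ hinner)
      _ = ∑ n ∈ Finset.Icc (-2:ℤ) 2, ∫ x, (V n * ∫ y, g ((n:ℝ) - (x - y)) ∂ρ) ∂ρ :=
          integral_finset_sum _ (fun n _ => (hkint n).const_mul (V n))
      _ = ∑ n ∈ Finset.Icc (-2:ℤ) 2, V n * ∫ x, (∫ y, g ((n:ℝ) - (x - y)) ∂ρ) ∂ρ :=
          Finset.sum_congr rfl fun n _ => integral_const_mul _ _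
  -- Step C
  have htransl : ∀ c x : ℝ, Integrable (fun t => f (t - x) * f (t - c)) (volume : Measure ℝ) := by
    intro c x
    apply Continuous.integrable_of_hasCompactSupport
    · exact (hf_cont.comp (continuous_id.sub continuous_const)).mul
        (hf_cont.comp (continuous_id.sub continuous_const))
    · exact (hfcs.comp_homeomorph (Homeomorph.subRight x)).mul_right
  have hstepC : ∀ n : ℤ, ∫ x, (∫ y, g ((n:ℝ) - (x - y)) ∂ρ) ∂ρ
      = ∫ t, φ t * φ (t - (n:ℝ)) := by
    intro n
    have hC1 : ∀ x y : ℝ, g ((n:ℝ) - (x - y)) = ∫ t, f (t - x) * f (t - (n:ℝ) - y) := by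
      intro x y
      rw [← integral_add_right_eq_self (fun t => f (t - x) * f (t - (n:ℝ) - y)) ((n:ℝ) + y)]
      simp only [hgdef]
      congr 1
      funext t
      congr 1 <;> congr 1 <;> ring
    have hC2 : ∀ x : ℝ, (∫ y, (∫ t, f (t - x) * f (t - (n:ℝ) - y)) ∂ρ)
        = ∫ t, f (t - x) * φ (t - (n:ℝ)) := by
      intro x
      rw [swap_nonneg (fun y t => f (t - x) * f (t - (n:ℝ) - y))
        ((hf_cont.comp (continuous_snd.sub continuous_const)).mul
          (hf_cont.comp ((continuous_snd.sub continuous_const).sub continuous_fst)))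
        (fun y t => mul_nonneg (hf_pos _) (hf_pos _))
        (fun y => by
          have := htransl ((n:ℝ) + y) x
          simpa [sub_sub] using this)
        (fun t => by
          apply Integrable.const_mul
          apply integrable_of_bdd_cont ρ _ M
          · exact hf_cont.comp (continuous_const.sub continuous_id)
          · intro y; rw [abs_of_nonneg (hf_pos _)]; exact hMb _)]
      apply integral_congr_ae (ae_of_all _ fun t => ?_)
      rw [integral_const_mul]
    apply Eq.trans (integral_congr_ae (ae_of_all _ fun x =>
      Eq.trans (integral_congr_ae (ae_of_all _ fun y => hC1 x y)) (hC2 x)))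
    rw [swap_nonneg (fun x t => f (t - x) * φ (t - (n:ℝ)))
      ((hf_cont.comp (continuous_snd.sub continuous_fst)).mul
        (hφc.comp (continuous_snd.sub continuous_const)))
      (fun x t => mul_nonneg (hf_pos _) (hφ0 _))
      (fun x => by
        apply Continuous.integrable_of_hasCompactSupport
        · exact (hf_cont.comp (continuous_id.sub continuous_const)).mul
            (hφc.comp (continuous_id.sub continuous_const))
        · exact (hfcs.comp_homeomorph (Homeomorph.subRight x)).mul_right)
      (fun t => by
        apply Integrable.mul_const
        apply integrable_of_bdd_cont ρ _ M
        · exact hf_cont.comp (continuous_const.sub continuous_id)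
        · intro x; rw [abs_of_nonneg (hf_pos _)]; exact hMb _)]
    apply integral_congr_ae (ae_of_all _ fun t => ?_)
    rw [integral_mul_const]
  -- assembly
  rw [houter]
  have hrw : ∀ n ∈ Finset.Icc (-2:ℤ) 2,
      V n * (∫ x, (∫ y, g ((n:ℝ) - (x - y)) ∂ρ) ∂ρ)
      = V n * ∫ t, φ t * φ (t - (n:ℝ)) := fun n _ => by rw [hstepC n]
  rw [Finset.sum_congr rfl hrw]
  have key := final_ineq φ hφc hφ0 hφL Cφ hφb
  have hsym : ∀ c : ℝ, (∫ t, φ t * φ (t + c)) = ∫ t, φ t * φ (t - c) := by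
    intro c
    have h2 := integral_add_right_eq_self (μ := (volume : Measure ℝ)) (fun s => φ (s - c) * φ s) c
    rw [show (fun t => (fun s => φ (s - c) * φ s) (t + c)) = fun t => φ t * φ (t + c) from
      funext fun t => by simp only [add_sub_cancel_right]] at h2
    rw [h2]
    exact integral_congr_ae (ae_of_all _ fun s => mul_comm _ _)
  have hVm2 : V (-2) = 1 := by norm_num [V]
  have hVm1 : V (-1) = -1 := by norm_num [V]
  have hV0 : V 0 = 1 := by norm_num [V]
  have hV1 : V 1 = -1 := by norm_num [V]
  have hV2 : V 2 = 1 := by norm_num [V]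
  have hIcc : Finset.Icc (-2:ℤ) 2 = ({-2, -1, 0, 1, 2} : Finset ℤ) := by decide
  rw [hIcc, Finset.sum_insert (by decide), Finset.sum_insert (by decide),
    Finset.sum_insert (by decide), Finset.sum_insert (by decide), Finset.sum_singleton]
  simp only [Int.cast_neg, Int.cast_ofNat, Int.cast_one, Int.cast_zero, sub_neg_eq_add,
    sub_zero, hVm2, hVm1, hV0, hV1, hV2]
  rw [hsym 2, hsym 1]
  linarith [key]
end

section
/- If f is not identically zero, then W is not the sum of a nonnegative function and a real continuous positive definite function: there do not exist h, g : ℝ → ℝ such that h x ≥ 0 for all x, g is continuous and positive definite, and W = h + g. -/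
open Finset
open scoped ComplexOrder

theorem W_not_decomposable (f : ℝ → ℝ) (hf_cont : Continuous f)
    (hf_pos : ∀ x, 0 ≤ f x)
    (hf_supp : Function.support f ⊆ Set.Ioo (-(1/2) : ℝ) (1/2))
    (hf_ne : f ≠ 0)
    (W : ℝ → ℝ)
    (hW : W = fun x => ∑ᶠ n : ℤ, V n * ∫ y : ℝ, f (n - x + y) * f y) :
    ¬ ∃ h g : ℝ → ℝ, (∀ x, 0 ≤ h x) ∧ Continuous g ∧ IsPosDef g ∧ W = h + g := by
  rintro ⟨h, g, hh, hgc, hgpd, hWhg⟩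
  set A : ℝ → ℝ := fun t => ∫ y : ℝ, f (t + y) * f y with hA
  -- A vanishes for |t| ≥ 1
  have hAzero : ∀ t : ℝ, 1 ≤ |t| → A t = 0 := by
    intro t ht
    have hz : (fun y => f (t + y) * f y) = 0 := by
      funext y
      by_cases hy : f y = 0
      · simp [hy]
      · have h1 := hf_supp hy
        by_cases h2 : f (t + y) = 0
        · simp [h2]
        · have h3 := hf_supp h2
          simp only [Set.mem_Ioo] at h1 h3
          have : |t| < 1 := abs_lt.2 ⟨by linarith, by linarith⟩
          linarith
    simp only [hA, hz]
    exact MeasureTheory.integral_zero _ _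
  -- W formula
  have hWval : ∀ x : ℝ, W x =
      A (-2 - x) - A (-1 - x) + A (0 - x) - A (1 - x) + A (2 - x) := by
    intro x
    have hsupp : Function.support (fun n : ℤ => V n * ∫ y : ℝ, f (n - x + y) * f y)
        ⊆ (({-2, -1, 0, 1, 2} : Finset ℤ) : Set ℤ) := by
      intro n hn
      simp only [Function.mem_support, ne_eq] at hn
      by_contra hmem
      simp only [Finset.coe_insert, Set.mem_insert_iff, Finset.coe_singleton,
        Set.mem_singleton_iff] at hmem
      push_neg at hmem
      have : V n = 0 := by
        simp only [V]
        rw [if_neg, if_neg] <;> omega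
      simp [this] at hn
    rw [hW]
    simp only
    rw [finsum_eq_sum_of_support_subset _ hsupp]
    norm_num [Finset.sum_insert, Finset.mem_insert, V, hA]
    ring
  -- A 0 > 0
  have hApos : 0 < A 0 := by
    have hcs : HasCompactSupport f := by
      apply HasCompactSupport.intro (isCompact_Icc (a := (-(1/2) : ℝ)) (b := 1/2))
      intro x hx
      by_contra hfx
      exact hx (Set.Ioo_subset_Icc_self (hf_supp hfx))
    have hint : MeasureTheory.Integrable (fun y => f (0 + y) * f y) := by
      simp only [zero_add]
      exact ((hf_cont.mul hf_cont)).integrable_of_hasCompactSupport (hcs.mul_left)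
    rw [hA]
    simp only
    rw [MeasureTheory.integral_pos_iff_support_of_nonneg
      (fun y => mul_nonneg (hf_pos _) (hf_pos _)) hint]
    have hso : Function.support (fun y => f (0 + y) * f y) = Function.support f := by
      ext y; simp [Function.mem_support, mul_eq_zero, not_or]
    rw [hso]
    exact (hf_cont.isOpen_support).measure_pos _
      (Function.support_nonempty_iff.2 hf_ne)
  -- values of W
  have hW0 : W 0 = A 0 := by
    rw [hWval]
    rw [hAzero (-2-0) (by norm_num), hAzero (-1-0) (by norm_num),
      hAzero (1-0) (by norm_num), hAzero (2-0) (by norm_num)]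
    norm_num
  have hW1 : W 1 = -A 0 := by
    rw [hWval]
    rw [hAzero (-2-1) (by norm_num), hAzero (-1-1) (by norm_num),
      hAzero (0-1) (by norm_num), hAzero (2-1) (by norm_num)]
    norm_num
  have hWm1 : W (-1) = -A 0 := by
    rw [hWval]
    rw [hAzero (-2-(-1)) (by norm_num), hAzero (0-(-1)) (by norm_num),
      hAzero (1-(-1)) (by norm_num), hAzero (2-(-1)) (by norm_num)]
    norm_num
  have hW4 : W 4 = 0 := by
    rw [hWval]
    rw [hAzero (-2-4) (by norm_num), hAzero (-1-4) (by norm_num),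
      hAzero (0-4) (by norm_num), hAzero (1-4) (by norm_num), hAzero (2-4) (by norm_num)]
    norm_num
  have hWm4 : W (-4) = 0 := by
    rw [hWval]
    rw [hAzero (-2-(-4)) (by norm_num), hAzero (-1-(-4)) (by norm_num),
      hAzero (0-(-4)) (by norm_num), hAzero (1-(-4)) (by norm_num),
      hAzero (2-(-4)) (by norm_num)]
    norm_num
  -- pointwise bound g ≤ W
  have hgW : ∀ x, g x ≤ W x := by
    intro x
    have := hh x
    have : W x = h x + g x := by rw [hWhg]; rfl
    linarith [hh x]
  -- two point positivity
  have hP2 : 0 ≤ 2 * g 0 + g (-1) + g 1 := by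
    have := hgpd 2 ![0, 1] ![1, 1]
    simp only [Fin.sum_univ_two, Matrix.cons_val_zero, Matrix.cons_val_one,
      Matrix.head_cons, map_one, one_mul, mul_one, sub_self, sub_zero, zero_sub] at this
    rw [show ((g 0 : ℂ) + g (-1) + (g 1 + g 0)) = ((2 * g 0 + g (-1) + g 1 : ℝ) : ℂ) by
      push_cast; ring] at this
    exact_mod_cast this
  -- equalities forced
  have hg0 : g 0 ≤ A 0 := by rw [← hW0]; exact hgW 0
  have hS1 : g (-1) + g 1 ≤ -2 * A 0 := by
    have := hgW 1
    have := hgW (-1)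
    rw [hW1] at *
    linarith [hgW 1, hgW (-1), hWm1]
  have hg0A : g 0 = A 0 := by linarith
  have hS1eq : g (-1) + g 1 = -2 * g 0 := by linarith
  -- anti-periodicity of S
  have hanti : ∀ t : ℝ, (g (-(t+1)) + g (t+1)) = -(g (-t) + g t) := by
    intro t
    have key : ∀ s : ℝ, 0 ≤ s^2 * g 0 + s * ((g (-t) + g t) + (g (-(t+1)) + g (t+1))) := by
      intro s
      have := hgpd 3 ![0, t, t+1] ![(s : ℂ), 1, 1]
      simp only [Fin.sum_univ_three, Matrix.cons_val_zero, Matrix.cons_val_one,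
        Matrix.head_cons, Matrix.cons_val_two, Matrix.tail_cons, map_one,
        Complex.conj_ofReal, one_mul, mul_one, sub_self, sub_zero, zero_sub] at this
      rw [show t - (t+1) = -1 by ring, show t + 1 - t = 1 by ring] at this
      rw [show ((s:ℂ) * s * g 0 + s * (g (-t)) + s * (g (-(t+1))) + ((s:ℂ) * g t + g 0 + g (-1)) +
          ((s:ℂ) * g (t+1) + g 1 + g 0) : ℂ) =
          ((s^2 * g 0 + s * ((g (-t) + g t) + (g (-(t+1)) + g (t+1))) + (2 * g 0 + (g (-1) + g 1)) : ℝ) : ℂ) by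
        push_cast; ring] at this
      have := Complex.zero_le_real.1 this
      rw [hS1eq] at this
      linarith
    set D := (g (-t) + g t) + (g (-(t+1)) + g (t+1)) with hD
    have h0pos : 0 < g 0 := by rw [hg0A]; exact hApos
    have h2 := key (-D / (2 * g 0))
    have heq : (-D / (2 * g 0))^2 * g 0 + (-D / (2 * g 0)) * D = -(D^2) / (4 * g 0) := by
      field_simp
      ring
    rw [heq] at h2
    have h3 : 0 ≤ (-(D^2) / (4 * g 0)) * (4 * g 0) :=
      mul_nonneg h2 (by positivity)
    rw [div_mul_cancel₀] at h3
    · have hD0 : D = 0 := by nlinarith [sq_nonneg D]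
      have : g (-t) + g t + (g (-(t + 1)) + g (t + 1)) = 0 := hD0
      linarith
    · positivity
  -- conclude
  have e0 := hanti 0
  have e1 := hanti 1
  have e2 := hanti 2
  have e3 := hanti 3
  norm_num at e0 e1 e2 e3
  have hfin : g (-4) + g 4 ≤ 0 := by
    have h4a := hgW 4
    have h4b := hgW (-4)
    rw [hW4] at h4a
    rw [hWm4] at h4b
    linarith
  linarith
end

section
/- ∑_{m ∈ ℤ} μ m * W m = (2 - √5) * ∫_ℝ (f y)² dy. (The sum has only finitely many nonzero terms since W vanishes outside (-3, 3).) In particular, if f is not identically zero, this sum is negative. -/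
open Finset

theorem sum_mu_mul_W (f : ℝ → ℝ) (hf_cont : Continuous f) (hf_pos : ∀ x, 0 ≤ f x)
    (hf_supp : Function.support f ⊆ Set.Ioo (-(1/2) : ℝ) (1/2))
    (W : ℝ → ℝ)
    (hW : W = fun x => ∑ᶠ n : ℤ, V n * ∫ y : ℝ, f (n - x + y) * f y) :
    (∑ᶠ m : ℤ, μ m * W m) = (2 - Real.sqrt 5) * ∫ y : ℝ, (f y) ^ 2 ∧
    (f ≠ 0 → (∑ᶠ m : ℤ, μ m * W m) < 0) := by
  set I : ℝ := ∫ y : ℝ, (f y) ^ 2 with hI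
  -- each W m = V m * I
  have hWm : ∀ m : ℤ, W (m : ℝ) = V m * I := by
    intro m
    rw [hW]
    have key : ∀ n : ℤ, (∫ y : ℝ, f ((n : ℝ) - (m : ℝ) + y) * f y) =
        if n = m then I else 0 := by
      intro n
      by_cases h : n = m
      · subst h
        simp [hI, pow_two]
      · have hzero : (fun y : ℝ => f ((n : ℝ) - (m : ℝ) + y) * f y) = fun _ => 0 := by
          funext y
          by_cases h1 : f y = 0
          · simp [h1]
          by_cases h2 : f ((n : ℝ) - (m : ℝ) + y) = 0
          · simp [h2]
          exfalso
          have hy := hf_supp h1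
          have hy2 := hf_supp h2
          simp only [Set.mem_Ioo] at hy hy2
          have h1' : (-1 : ℝ) < ((n - m : ℤ) : ℝ) := by push_cast; linarith [hy.1, hy.2, hy2.1, hy2.2]
          have h2' : ((n - m : ℤ) : ℝ) < 1 := by push_cast; linarith [hy.1, hy.2, hy2.1, hy2.2]
          have : (-1 : ℤ) < n - m := by exact_mod_cast h1'
          have : (n - m : ℤ) < 1 := by exact_mod_cast h2'
          omega
        simp only [if_neg h]
        rw [hzero]
        simp
    simp only [key]
    rw [finsum_eq_single (fun n : ℤ => V n * if n = m then I else 0) m]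
    · simp
    · intro n hn; simp [hn]
  have hsum : (∑ᶠ m : ℤ, μ m * W m) = (2 - Real.sqrt 5) * I := by
    have hsupp : Function.support (fun m : ℤ => μ m * W (m : ℝ)) ⊆
        (({-2, -1, 0, 1, 2} : Finset ℤ) : Set ℤ) := by
      intro m hm
      simp only [Function.mem_support, hWm] at hm
      by_contra hmem
      simp only [Finset.coe_insert, Set.mem_insert_iff, Finset.coe_singleton,
        Set.mem_singleton_iff] at hmem
      push_neg at hmem
      have : V m = 0 := by
        unfold V
        rw [if_neg, if_neg] <;> push_neg <;> omega
      simp [this] at hm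
    rw [finsum_eq_sum_of_support_subset _ hsupp]
    have e0 : μ 0 = 1 := by simp [μ]
    have e1 : μ 1 = (Real.sqrt 5 - 1) / 2 := by
      simp only [μ, if_neg (show ((1:ℤ) : ZMod 5) ≠ 0 by decide),
        if_pos (show ((1:ℤ) : ZMod 5) = 1 ∨ ((1:ℤ) : ZMod 5) = -1 from Or.inl (by decide))]
    have e1' : μ (-1) = (Real.sqrt 5 - 1) / 2 := by
      simp only [μ, if_neg (show ((-1:ℤ) : ZMod 5) ≠ 0 by decide),
        if_pos (show ((-1:ℤ) : ZMod 5) = 1 ∨ ((-1:ℤ) : ZMod 5) = -1 from Or.inr (by decide))]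
    have e2 : μ 2 = 0 := by
      simp only [μ, if_neg (show ((2:ℤ) : ZMod 5) ≠ 0 by decide),
        if_neg (show ¬(((2:ℤ) : ZMod 5) = 1 ∨ ((2:ℤ) : ZMod 5) = -1) by decide)]
    have e2' : μ (-2) = 0 := by
      simp only [μ, if_neg (show ((-2:ℤ) : ZMod 5) ≠ 0 by decide),
        if_neg (show ¬(((-2:ℤ) : ZMod 5) = 1 ∨ ((-2:ℤ) : ZMod 5) = -1) by decide)]
    simp only [hWm]
    norm_num [Finset.sum_insert, Finset.mem_insert, e0, e1, e1', e2, e2', V]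
    ring
  refine ⟨hsum, fun hne => ?_⟩
  rw [hsum]
  have hcs : HasCompactSupport f := by
    apply HasCompactSupport.of_support_subset_isCompact (isCompact_Icc (a := (-(1/2):ℝ)) (b := 1/2))
    exact hf_supp.trans Set.Ioo_subset_Icc_self
  have hint : MeasureTheory.Integrable (fun y => (f y) ^ 2) := by
    apply (hf_cont.pow 2).integrable_of_hasCompactSupport
    apply HasCompactSupport.of_support_subset_isCompact
      (isCompact_Icc (a := (-(1/2):ℝ)) (b := 1/2))
    intro y hy
    have hfy : f y ≠ 0 := fun h => hy (by simp [Function.mem_support, h])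
    exact Set.Ioo_subset_Icc_self (hf_supp hfy)
  have hIpos : 0 < I := by
    rw [hI, MeasureTheory.integral_pos_iff_support_of_nonneg (fun y => sq_nonneg (f y)) hint]
    have hsupp_eq : Function.support (fun y => (f y) ^ 2) = Function.support f := by
      ext y; simp [pow_eq_zero_iff, Function.mem_support]
    rw [hsupp_eq]
    have hopen : IsOpen (Function.support f) := hf_cont.isOpen_support
    have hne' : (Function.support f).Nonempty := Function.support_nonempty_iff.mpr hne
    exact hopen.measure_pos _ hne'
  have h5 : (2 : ℝ) < Real.sqrt 5 := by
    nlinarith [Real.sq_sqrt (by norm_num : (5:ℝ) ≥ 0), Real.sqrt_nonneg 5]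
  exact mul_neg_of_neg_of_pos (by linarith) hIpos
end

section
/- Let ρ : ZMod 5 → ℝ satisfy ρ m ≥ 0 for all m, and define the correlation measure μ : ZMod 5 → ℝ by μ n = ∑_{m ∈ ZMod 5} ρ m * ρ (m + n). Then for every k ∈ ZMod 5 with k ≠ 0, μ k ≤ (∑_{n ∈ ZMod 5} μ n)/4 = (∑_{m ∈ ZMod 5} ρ m)²/4. -/
open Finset

lemma sum5_aux (f : ZMod 5 → ℝ) : ∑ x : ZMod 5, f x = f 0 + f 1 + f 2 + f 3 + f 4 := by
  show ∑ x : Fin 5, f x = _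
  exact Fin.sum_univ_five f

set_option maxHeartbeats 1000000 in
lemma cycle5_ineq (a b c d f : ℝ) (ha : 0 ≤ a) (hb : 0 ≤ b) (hc : 0 ≤ c) (hd : 0 ≤ d)
    (hf : 0 ≤ f) :
    a * b + b * c + c * d + d * f + f * a ≤ (a + b + c + d + f) ^ 2 / 4 := by
  nlinarith [sq_nonneg (a - b + c - d + f), sq_nonneg (b - c + d - f + a),
    sq_nonneg (c - d + f - a + b), sq_nonneg (d - f + a - b + c), sq_nonneg (f - a + b - c + d),
    mul_nonneg ha hb, mul_nonneg hb hc, mul_nonneg hc hd, mul_nonneg hd hf, mul_nonneg hf ha,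
    mul_nonneg ha hc, mul_nonneg hb hd, mul_nonneg hc hf, mul_nonneg hd ha, mul_nonneg hf hb]

theorem correlation_measure_bound (ρ : ZMod 5 → ℝ) (hρ : ∀ m, 0 ≤ ρ m)
    (μ : ZMod 5 → ℝ) (hμ : μ = fun n => ∑ m : ZMod 5, ρ m * ρ (m + n)) :
    (∑ n : ZMod 5, μ n) / 4 = (∑ m : ZMod 5, ρ m) ^ 2 / 4 ∧
    ∀ k : ZMod 5, k ≠ 0 → μ k ≤ (∑ n : ZMod 5, μ n) / 4 := by
  subst hμ
  have h0 := hρ 0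
  have h1 := hρ 1
  have h2 := hρ 2
  have h3 := hρ 3
  have h4 := hρ 4
  have e : ∀ n : ZMod 5, (∑ m : ZMod 5, ρ m * ρ (m + n)) =
      ρ 0 * ρ (0 + n) + ρ 1 * ρ (1 + n) + ρ 2 * ρ (2 + n) + ρ 3 * ρ (3 + n) + ρ 4 * ρ (4 + n) :=
    fun n => sum5_aux _
  have key : (∑ n : ZMod 5, ∑ m : ZMod 5, ρ m * ρ (m + n)) =
      (ρ 0 + ρ 1 + ρ 2 + ρ 3 + ρ 4) ^ 2 := by
    rw [sum5_aux (fun n => ∑ m : ZMod 5, ρ m * ρ (m + n))]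
    simp only [e]
    norm_num
    simp only [show (5 : ZMod 5) = 0 by decide, show (6 : ZMod 5) = 1 by decide,
      show (7 : ZMod 5) = 2 by decide, show (8 : ZMod 5) = 3 by decide]
    ring
  constructor
  · rw [key, sum5_aux ρ]
  · intro k hk
    rw [key]
    have hcase : k = 1 ∨ k = 2 ∨ k = 3 ∨ k = 4 := by revert hk; revert k; decide
    rcases hcase with rfl | rfl | rfl | rfl
    · beta_reduce
      rw [e]
      simp only [show (0 + 1 : ZMod 5) = 1 by decide, show (1 + 1 : ZMod 5) = 2 by decide,
        show (2 + 1 : ZMod 5) = 3 by decide, show (3 + 1 : ZMod 5) = 4 by decide,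
        show (4 + 1 : ZMod 5) = 0 by decide]
      have := cycle5_ineq (ρ 0) (ρ 1) (ρ 2) (ρ 3) (ρ 4) h0 h1 h2 h3 h4
      nlinarith [this]
    · beta_reduce
      rw [e]
      simp only [show (0 + 2 : ZMod 5) = 2 by decide, show (1 + 2 : ZMod 5) = 3 by decide,
        show (2 + 2 : ZMod 5) = 4 by decide, show (3 + 2 : ZMod 5) = 0 by decide,
        show (4 + 2 : ZMod 5) = 1 by decide]
      have := cycle5_ineq (ρ 0) (ρ 2) (ρ 4) (ρ 1) (ρ 3) h0 h2 h4 h1 h3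
      nlinarith [this]
    · beta_reduce
      rw [e]
      simp only [show (0 + 3 : ZMod 5) = 3 by decide, show (1 + 3 : ZMod 5) = 4 by decide,
        show (2 + 3 : ZMod 5) = 0 by decide, show (3 + 3 : ZMod 5) = 1 by decide,
        show (4 + 3 : ZMod 5) = 2 by decide]
      have := cycle5_ineq (ρ 0) (ρ 3) (ρ 1) (ρ 4) (ρ 2) h0 h3 h1 h4 h2
      nlinarith [this]
    · beta_reduce
      rw [e]
      simp only [show (0 + 4 : ZMod 5) = 4 by decide, show (1 + 4 : ZMod 5) = 0 by decide,
        show (2 + 4 : ZMod 5) = 1 by decide, show (3 + 4 : ZMod 5) = 2 by decide,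
        show (4 + 4 : ZMod 5) = 3 by decide]
      have := cycle5_ineq (ρ 0) (ρ 4) (ρ 3) (ρ 2) (ρ 1) h0 h4 h3 h2 h1
      nlinarith [this]
end

section
/- For t ∈ ℝ with -1 ≤ t < -(√5 + 1)/4, define V_t : ℤ → ℝ by V_t 0 = V_t 2 = V_t (-2) = 1, V_t 1 = V_t (-1) = t, and V_t n = 0 whenever |n| ≥ 3. Then V_t is stable, but V_t is not the sum of a nonnegative function and a positive definite function: there do not exist f, g : ℤ → ℝ with f n ≥ 0 for all n, g positive definite, and V_t = f + g. -/
open Finset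
open scoped ComplexOrder

private theorem stab (t : ℝ) (ht₁ : -1 ≤ t)
    (Vt : ℤ → ℝ)
    (hVt : Vt = fun n =>
      if n = 0 ∨ n = 2 ∨ n = -2 then 1
      else if n = 1 ∨ n = -1 then t
      else 0)
    (ρ : ℤ → ℝ) (hfin : (Function.support ρ).Finite) (hpos : ∀ n, 0 ≤ ρ n) :
    0 ≤ ∑ᶠ m, ∑ᶠ n, ρ m * Vt (m - n) * ρ n := by
  have hV0 : Vt 0 = 1 := by norm_num [hVt]
  have hV1 : Vt 1 = t := by norm_num [hVt]
  have hV2 : Vt 2 = 1 := by norm_num [hVt]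
  have hVsymm : ∀ d : ℤ, Vt (-d) = Vt d := by
    intro d; simp only [hVt]
    split_ifs with h1 h2 h3 h4 <;> first | rfl | omega
  have hVbig : ∀ d : ℤ, 2 < d → Vt d = 0 := by
    intro d hd; simp only [hVt]
    split_ifs with h1 h2 <;> first | rfl | omega
  classical
  set T := hfin.toFinset with hT
  obtain ⟨M, hmem⟩ : ∃ M : ℕ, ∀ x : ℤ, ρ x ≠ 0 → x.natAbs ≤ M :=
    ⟨T.sup Int.natAbs,
      fun x hx => Finset.le_sup (f := Int.natAbs) (hfin.mem_toFinset.mpr hx)⟩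
  set τ : ℤ → ℝ := fun z => ρ (z - M) with hτ
  have hτpos : ∀ z : ℤ, 0 ≤ τ z := fun z => hpos _
  have hτ0 : ∀ z : ℤ, z < 0 → τ z = 0 := by
    intro z hz
    by_contra h
    have := hmem _ h
    omega
  -- the induction claim
  have hSL : ∀ L : ℕ, ∑ j ∈ range L, Vt ((L : ℤ) - j) * τ j
      = t * τ ((L : ℤ) - 1) + τ ((L : ℤ) - 2) := by
    intro L
    match L with
    | 0 => simp [hτ0 (-1) (by norm_num), hτ0 (-2) (by norm_num)]
    | 1 =>
      rw [Finset.sum_range_one]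
      have h2 : ((1:ℕ):ℤ) - 2 = -1 := by norm_num
      norm_num [hV1, hτ0 (-1) (by norm_num)]
    | (L+2) =>
      rw [← Finset.sum_subset (s₁ := ({L, L+1} : Finset ℕ))
        (by intro x hx; simp only [Finset.mem_insert, Finset.mem_singleton] at hx
            rcases hx with h|h <;> simp [h, Finset.mem_range] <;> omega)
        (by intro x hx hxn
            simp only [Finset.mem_insert, Finset.mem_singleton, not_or] at hxn
            simp only [Finset.mem_range] at hx
            have : Vt ((L+2:ℕ) - (x:ℤ)) = 0 := by
              apply hVbig; omega
            rw [this, zero_mul])]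
      rw [Finset.sum_pair (by omega : L ≠ L + 1)]
      have e1 : ((L+2:ℕ):ℤ) - (L:ℕ) = 2 := by push_cast; ring
      have e2 : ((L+2:ℕ):ℤ) - ((L+1:ℕ):ℤ) = 1 := by push_cast; ring
      have e3 : ((L+2:ℕ):ℤ) - 1 = ((L+1:ℕ):ℤ) := by push_cast; ring
      have e4 : ((L+2:ℕ):ℤ) - 2 = ((L:ℕ):ℤ) := by push_cast; ring
      rw [e1, e2, e3, e4, hV1, hV2]
      ring
  have key : ∀ K : ℕ, (max (τ ((K:ℤ) - 1) - τ ((K:ℤ) - 2)) 0)^2 ≤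
      ∑ i ∈ range K, ∑ j ∈ range K, τ i * Vt ((i:ℤ) - j) * τ j := by
    intro K
    induction K with
    | zero =>
      have e1 : ((0:ℕ):ℤ) - 1 = -1 := by norm_num
      have e2 : ((0:ℕ):ℤ) - 2 = -2 := by norm_num
      rw [e1, e2, hτ0 (-1) (by norm_num), hτ0 (-2) (by norm_num)]
      simp
    | succ K ih =>
      rw [Finset.sum_range_succ]
      rw [Finset.sum_congr rfl (fun i (_ : i ∈ range K) => Finset.sum_range_succ
        (fun j => τ i * Vt ((i:ℤ) - j) * τ j) K)]
      rw [Finset.sum_add_distrib, Finset.sum_range_succ]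
      have c1 : ∑ i ∈ range K, τ i * Vt ((i:ℤ) - K) * τ K
          = (t * τ ((K:ℤ) - 1) + τ ((K:ℤ) - 2)) * τ K := by
        rw [← hSL K, Finset.sum_mul]
        apply Finset.sum_congr rfl
        intro i _
        have : Vt ((i:ℤ) - K) = Vt ((K:ℤ) - i) := by
          rw [← hVsymm ((K:ℤ) - i)]; ring_nf
        rw [this]; ring
      have c2 : ∑ j ∈ range K, τ K * Vt ((K:ℤ) - j) * τ j
          = (t * τ ((K:ℤ) - 1) + τ ((K:ℤ) - 2)) * τ K := by
        rw [← hSL K, Finset.sum_mul]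
        apply Finset.sum_congr rfl
        intro j _
        ring
      rw [c1, c2]
      have hKK : ((K:ℤ) - K) = 0 := by ring
      rw [hKK, hV0]
      have e3 : ((K+1:ℕ):ℤ) - 1 = (K:ℤ) := by push_cast; ring
      have e4 : ((K+1:ℕ):ℤ) - 2 = (K:ℤ) - 1 := by push_cast; ring
      rw [e3, e4]
      set a := τ ((K:ℤ) - 2) with ha'
      set b := τ ((K:ℤ) - 1) with hb'
      set c := τ (K:ℤ) with hc'
      have ha : 0 ≤ a := hτpos _
      have hb : 0 ≤ b := hτpos _
      have hc : 0 ≤ c := hτpos _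
      have htb : 0 ≤ (t + 1) * (c * b) := mul_nonneg (by linarith) (mul_nonneg hc hb)
      rcases le_total c b with h1 | h1 <;> rcases le_total b a with h2 | h2
      · rw [max_eq_right (by linarith : c - b ≤ 0)]
        have h0 : (0:ℝ) ≤ (max (b - a) 0)^2 := sq_nonneg _
        nlinarith [mul_nonneg hc (sub_nonneg.mpr h2)]
      · rw [max_eq_right (by linarith : c - b ≤ 0),
            max_eq_left (by linarith : (0:ℝ) ≤ b - a)] at *
        nlinarith [sq_nonneg (b - a - c)]
      · rw [max_eq_left (by linarith : (0:ℝ) ≤ c - b)]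
        have h0 : (0:ℝ) ≤ (max (b - a) 0)^2 := sq_nonneg _
        nlinarith [mul_nonneg (sub_nonneg.mpr h1) (sub_nonneg.mpr h2),
          mul_nonneg hb (sub_nonneg.mpr h2), mul_nonneg hb hb]
      · rw [max_eq_left (by linarith : (0:ℝ) ≤ c - b),
            max_eq_left (by linarith : (0:ℝ) ≤ b - a)] at *
        nlinarith [mul_nonneg ha (sub_nonneg.mpr h1), sq_nonneg (b - a - c)]
  -- conversion of the finsum to the finset sum
  set K : ℕ := 2 * M + 1 with hK
  set R : Finset ℤ := (range K).image (fun i : ℕ => (i : ℤ) - (M:ℤ)) with hR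
  have hTR : T ⊆ R := by
    intro x hx
    have hx' : ρ x ≠ 0 := (hfin.mem_toFinset).mp hx
    have := hmem x hx'
    simp only [hR, Finset.mem_image, Finset.mem_range]
    refine ⟨(x + M).toNat, by omega, by omega⟩
  have hrho0 : ∀ x : ℤ, x ∉ T → ρ x = 0 := by
    intro x hx
    by_contra h
    exact hx (hfin.mem_toFinset.mpr h)
  have hE1 : (∑ᶠ m, ∑ᶠ n, ρ m * Vt (m - n) * ρ n)
      = ∑ m ∈ T, ∑ n ∈ T, ρ m * Vt (m - n) * ρ n := by
    have hinner : ∀ m : ℤ, (∑ᶠ n, ρ m * Vt (m - n) * ρ n)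
        = ∑ n ∈ T, ρ m * Vt (m - n) * ρ n := by
      intro m
      apply finsum_eq_finset_sum_of_support_subset
      intro n hn
      simp only [Function.mem_support] at hn
      have : ρ n ≠ 0 := by intro h; exact hn (by rw [h, mul_zero])
      simpa [hT] using hfin.mem_toFinset.mpr this
    rw [finsum_congr hinner]
    apply finsum_eq_finset_sum_of_support_subset
    intro m hm
    simp only [Function.mem_support] at hm
    have : ρ m ≠ 0 := by
      intro h
      exact hm (Finset.sum_eq_zero fun n _ => by rw [h, zero_mul, zero_mul])
    simpa [hT] using hfin.mem_toFinset.mpr this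
  have hE2 : (∑ m ∈ T, ∑ n ∈ T, ρ m * Vt (m - n) * ρ n)
      = ∑ m ∈ R, ∑ n ∈ R, ρ m * Vt (m - n) * ρ n := by
    rw [Finset.sum_subset hTR (by
      intro m _ hmT
      exact Finset.sum_eq_zero fun n _ => by rw [hrho0 m hmT, zero_mul, zero_mul])]
    apply Finset.sum_congr rfl
    intro m _
    exact Finset.sum_subset hTR (fun n _ hnT => by rw [hrho0 n hnT, mul_zero])
  have hinj : ∀ x ∈ range K, ∀ y ∈ range K,
      ((x : ℤ) - M = (y : ℤ) - M) → x = y := by intro x _ y _ h; omega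
  have hE3 : (∑ m ∈ R, ∑ n ∈ R, ρ m * Vt (m - n) * ρ n)
      = ∑ i ∈ range K, ∑ j ∈ range K, τ i * Vt ((i:ℤ) - j) * τ j := by
    rw [hR, Finset.sum_image hinj]
    apply Finset.sum_congr rfl
    intro i _
    rw [Finset.sum_image hinj]
    apply Finset.sum_congr rfl
    intro j _
    have : ((i:ℤ) - M) - ((j:ℤ) - M) = (i:ℤ) - j := by ring
    rw [this]
  rw [hE1, hE2, hE3]
  exact le_trans (sq_nonneg _) (key K)

private theorem nodecomp (t : ℝ)
    (ht₂ : t < -(Real.sqrt 5 + 1) / 4)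
    (Vt : ℤ → ℝ)
    (hVt : Vt = fun n =>
      if n = 0 ∨ n = 2 ∨ n = -2 then 1
      else if n = 1 ∨ n = -1 then t
      else 0) :
    ¬ ∃ f g : ℤ → ℝ, (∀ n, 0 ≤ f n) ∧ IsPosDef g ∧ Vt = f + g := by
  have h5 : Real.sqrt 5 ^ 2 = 5 := Real.sq_sqrt (by norm_num)
  have h5' : (2:ℝ) < Real.sqrt 5 := by nlinarith [Real.sqrt_nonneg 5]
  rintro ⟨f, g, hf, hg, hfg⟩
  have hgV : ∀ d : ℤ, g d ≤ Vt d := by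
    intro d
    have h1 := congrFun hfg d
    have h2 := hf d
    simp only [Pi.add_apply] at h1
    linarith [h1.ge, h1.le]
  -- cosine values
  have hpi5 := Real.cos_pi_div_five
  have hcos1 : Real.cos (2*Real.pi/5) = (Real.sqrt 5 - 1)/4 := by
    have h := Real.cos_two_mul (Real.pi/5)
    rw [hpi5] at h
    rw [show 2*Real.pi/5 = 2*(Real.pi/5) by ring, h]
    nlinarith [h5]
  have hcos2 : Real.cos (4*Real.pi/5) = -(1 + Real.sqrt 5)/4 := by
    have h := Real.cos_two_mul (2*Real.pi/5)
    rw [hcos1] at h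
    rw [show 4*Real.pi/5 = 2*(2*Real.pi/5) by ring, h]
    nlinarith [h5]
  set θ : ℝ := 2*Real.pi/5 with hθ
  set w : ℤ → ℝ := fun d => (1 + Real.sqrt 5) + 4*Real.cos ((d:ℝ)*θ) with hw
  have hwper : ∀ d : ℤ, Real.cos ((d:ℝ)*θ) = Real.cos (((d % 5 : ℤ):ℝ)*θ) := by
    intro d
    have hd : d = 5*(d/5) + d % 5 := (Int.mul_ediv_add_emod d 5).symm
    have : (d:ℝ)*θ = ((d % 5 : ℤ):ℝ)*θ + (d/5 : ℤ)*(2*Real.pi) := by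
      rw [hθ]
      push_cast
      nth_rewrite 1 [hd]
      push_cast
      ring
    rw [this, Real.cos_add_int_mul_two_pi]
  have hw0 : w 0 = 5 + Real.sqrt 5 := by
    simp only [hw]
    norm_num
    ring
  have hw1 : w 1 = 2*Real.sqrt 5 := by
    simp only [hw]
    rw [show ((1:ℤ):ℝ)*θ = θ by push_cast; ring, hcos1]
    ring
  have hwm1 : w (-1) = 2*Real.sqrt 5 := by
    simp only [hw]
    push_cast
    rw [show (-1:ℝ)*θ = -(1*θ) by ring, Real.cos_neg]
    rw [one_mul, hcos1]
    ring
  have hw2 : w 2 = 0 := by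
    simp only [hw]
    rw [show ((2:ℤ):ℝ)*θ = 4*Real.pi/5 by rw [hθ]; push_cast; ring, hcos2]
    ring
  have hwm2 : w (-2) = 0 := by
    simp only [hw]
    rw [show ((-2:ℤ):ℝ)*θ = -(4*Real.pi/5) by rw [hθ]; push_cast; ring, Real.cos_neg, hcos2]
    ring
  have hwnn : ∀ d : ℤ, 0 ≤ w d := by
    intro d
    simp only [hw]
    rw [hwper d]
    have h0 : 0 ≤ d % 5 := Int.emod_nonneg d (by norm_num)
    have h5d : d % 5 < 5 := Int.emod_lt_of_pos d (by norm_num)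
    set r := d % 5 with hr
    interval_cases r
    · norm_num
      nlinarith [Real.sqrt_nonneg 5]
    · norm_num [hcos1]
      nlinarith [Real.sqrt_nonneg 5]
    · rw [show ((2:ℤ):ℝ)*θ = 4*Real.pi/5 by rw [hθ]; push_cast; ring, hcos2]
      nlinarith [Real.sqrt_nonneg 5]
    · rw [show ((3:ℤ):ℝ)*θ = 2*Real.pi - 4*Real.pi/5 by rw [hθ]; push_cast; ring,
        Real.cos_two_pi_sub, hcos2]
      nlinarith [Real.sqrt_nonneg 5]
    · rw [show ((4:ℤ):ℝ)*θ = 2*Real.pi - 2*Real.pi/5 by rw [hθ]; push_cast; ring,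
        Real.cos_two_pi_sub, hcos1]
      nlinarith [Real.sqrt_nonneg 5]
  -- the double-sum evaluation lemma
  have hVbig : ∀ d : ℤ, 2 < |d| → Vt d = 0 := by
    intro d hd
    rcases lt_abs.mp hd with h | h
    · simp only [hVt]; split_ifs with h1 h2 <;> first | rfl | omega
    · simp only [hVt]; split_ifs with h1 h2 <;> first | rfl | omega
  have hDS : ∀ F : ℤ → ℝ, (∀ d : ℤ, 2 < |d| → F d = 0) → ∀ N : ℕ, 2 ≤ N →
      ∑ i ∈ range N, ∑ j ∈ range N, F ((i:ℤ) - j)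
      = (N:ℝ) * F 0 + ((N:ℝ) - 1) * (F 1 + F (-1)) + ((N:ℝ) - 2) * (F 2 + F (-2)) := by
    intro F hF N hN
    induction N with
    | zero => omega
    | succ N ih =>
      rcases Nat.lt_or_ge N 2 with h2 | h2
      · have hN2 : N = 1 := by omega
        subst hN2
        simp only [Finset.sum_range_succ, Finset.sum_range_one]
        norm_num
        ring
      · have ihh := ih h2
        rw [Finset.sum_range_succ]
        rw [Finset.sum_congr rfl (fun i (_ : i ∈ range N) => Finset.sum_range_succ
          (fun j => F ((i:ℤ) - j)) N)]
        rw [Finset.sum_add_distrib, ihh, Finset.sum_range_succ]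
        have hA : ∑ j ∈ range N, F ((N:ℤ) - j) = F 1 + F 2 := by
          rw [← Finset.sum_subset (s₁ := ({N-1, N-2} : Finset ℕ))
            (by intro x hx
                simp only [Finset.mem_insert, Finset.mem_singleton] at hx
                simp only [Finset.mem_range]
                omega)
            (by intro x hx hxn
                simp only [Finset.mem_insert, Finset.mem_singleton, not_or] at hxn
                simp only [Finset.mem_range] at hx
                apply hF
                rw [lt_abs]
                left
                omega)]
          rw [Finset.sum_pair (by omega : N-1 ≠ N-2)]
          have e1 : (N:ℤ) - ((N-1:ℕ):ℤ) = 1 := by omega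
          have e2 : (N:ℤ) - ((N-2:ℕ):ℤ) = 2 := by omega
          rw [e1, e2]
        have hB : ∑ i ∈ range N, F ((i:ℤ) - N) = F (-1) + F (-2) := by
          rw [← Finset.sum_subset (s₁ := ({N-1, N-2} : Finset ℕ))
            (by intro x hx
                simp only [Finset.mem_insert, Finset.mem_singleton] at hx
                simp only [Finset.mem_range]
                omega)
            (by intro x hx hxn
                simp only [Finset.mem_insert, Finset.mem_singleton, not_or] at hxn
                simp only [Finset.mem_range] at hx
                apply hF
                rw [lt_abs]
                right
                omega)]
          rw [Finset.sum_pair (by omega : N-1 ≠ N-2)]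
          have e1 : ((N-1:ℕ):ℤ) - N = -1 := by omega
          have e2 : ((N-2:ℕ):ℤ) - N = -2 := by omega
          rw [e1, e2]
        rw [hA, hB]
        have : ((N:ℤ) - N) = 0 := by ring
        rw [this]
        push_cast
        ring
  have hV0 : Vt 0 = 1 := by norm_num [hVt]
  have hV1 : Vt 1 = t := by norm_num [hVt]
  have hVm1 : Vt (-1) = t := by norm_num [hVt]
  -- choose N
  have hδ : 0 < -4*Real.sqrt 5*t - (5 + Real.sqrt 5) := by nlinarith
  obtain ⟨n, hn⟩ := exists_nat_gt ((5 + Real.sqrt 5)/(-4*Real.sqrt 5*t - (5 + Real.sqrt 5)))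
  set N : ℕ := n + 2 with hNdef
  have hN2 : 2 ≤ N := by omega
  -- instance with coefficients 1
  have hA : (0:ℝ) ≤ ∑ i ∈ range N, ∑ j ∈ range N, g ((i:ℤ) - j) := by
    have h1 := hg N (fun i => ((i:ℕ):ℤ)) (fun _ => 1)
    have h1re := (Complex.le_def.mp h1).1
    rw [Complex.zero_re] at h1re
    rw [Complex.re_sum] at h1re
    simp only [Complex.re_sum, one_mul, map_one, Complex.ofReal_re] at h1re
    have heq : (∑ x : Fin N, ∑ y : Fin N, g (((x:ℕ):ℤ) - ((y:ℕ):ℤ)))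
        = ∑ i ∈ range N, ∑ j ∈ range N, g ((i:ℤ) - j) := by
      rw [← Fin.sum_univ_eq_sum_range (fun i => ∑ j ∈ range N, g ((i:ℤ) - j)) N]
      apply Finset.sum_congr rfl
      intro x _
      exact Fin.sum_univ_eq_sum_range (fun j => g (((x:ℕ):ℤ) - j)) N
    rw [← heq]
    exact h1re
  -- instance with coefficients exp(i j θ)
  have hB : (0:ℝ) ≤ ∑ i ∈ range N, ∑ j ∈ range N,
      Real.cos ((((i:ℤ) - j : ℤ):ℝ)*θ) * g ((i:ℤ) - j) := by
    have h2 := hg N (fun i => ((i:ℕ):ℤ))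
      (fun i => Complex.exp ((((i:ℕ):ℝ)*θ : ℝ) * Complex.I))
    have h2re := (Complex.le_def.mp h2).1
    rw [Complex.zero_re] at h2re
    have hterm : ∀ i j : ℕ,
        (Complex.exp (((i:ℝ)*θ : ℝ) * Complex.I) *
          (starRingEnd ℂ) (Complex.exp (((j:ℝ)*θ : ℝ) * Complex.I)) *
            ((g (((i:ℤ) - j)) : ℝ) : ℂ)).re
        = Real.cos ((((i:ℤ) - j : ℤ):ℝ)*θ) * g ((i:ℤ) - j) := by
      intro i j
      have hconj : (starRingEnd ℂ) (Complex.exp (((j:ℝ)*θ : ℝ) * Complex.I))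
          = Complex.exp (((-((j:ℝ)*θ) : ℝ)) * Complex.I) := by
        rw [← Complex.exp_conj]
        congr 1
        simp [map_mul, Complex.conj_ofReal, Complex.conj_I]
        try ring
      rw [hconj, ← Complex.exp_add]
      have harg : (((i:ℝ)*θ : ℝ) : ℂ) * Complex.I + ((-((j:ℝ)*θ) : ℝ) : ℂ) * Complex.I
          = (((((i:ℤ) - j : ℤ):ℝ)*θ : ℝ) : ℂ) * Complex.I := by
        push_cast
        ring
      rw [harg, Complex.mul_re, Complex.exp_ofReal_mul_I_re, Complex.ofReal_re,
        Complex.ofReal_im, mul_zero, sub_zero]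
    calc (0:ℝ) ≤ (∑ i : Fin N, ∑ j : Fin N,
          Complex.exp ((((i:ℕ):ℝ)*θ : ℝ) * Complex.I) *
            (starRingEnd ℂ) (Complex.exp ((((j:ℕ):ℝ)*θ : ℝ) * Complex.I)) *
              ((g (((i:ℕ):ℤ) - ((j:ℕ):ℤ)) : ℝ) : ℂ)).re := h2re
    _ = ∑ i ∈ range N, ∑ j ∈ range N,
          Real.cos ((((i:ℤ) - j : ℤ):ℝ)*θ) * g ((i:ℤ) - j) := by
        rw [Complex.re_sum]
        rw [← Fin.sum_univ_eq_sum_range (fun i => ∑ j ∈ range N,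
          Real.cos ((((i:ℤ) - j : ℤ):ℝ)*θ) * g ((i:ℤ) - j)) N]
        apply Finset.sum_congr rfl
        intro i _
        rw [Complex.re_sum]
        rw [← Fin.sum_univ_eq_sum_range (fun j => Real.cos (((((i:ℕ):ℤ) - j : ℤ):ℝ)*θ)
          * g (((i:ℕ):ℤ) - j)) N]
        apply Finset.sum_congr rfl
        intro j _
        exact hterm i j
  -- combination
  have hcomb : (0:ℝ) ≤ ∑ i ∈ range N, ∑ j ∈ range N, w ((i:ℤ) - j) * g ((i:ℤ) - j) := by
    have hsplit : ∑ i ∈ range N, ∑ j ∈ range N, w ((i:ℤ) - j) * g ((i:ℤ) - j)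
        = (1 + Real.sqrt 5) * (∑ i ∈ range N, ∑ j ∈ range N, g ((i:ℤ) - j))
          + 4 * (∑ i ∈ range N, ∑ j ∈ range N,
              Real.cos ((((i:ℤ) - j : ℤ):ℝ)*θ) * g ((i:ℤ) - j)) := by
      rw [Finset.mul_sum, Finset.mul_sum, ← Finset.sum_add_distrib]
      apply Finset.sum_congr rfl
      intro i _
      rw [Finset.mul_sum, Finset.mul_sum, ← Finset.sum_add_distrib]
      apply Finset.sum_congr rfl
      intro j _
      simp only [hw]
      ring
    rw [hsplit]
    have h15 : (0:ℝ) ≤ 1 + Real.sqrt 5 := by nlinarith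
    exact add_nonneg (mul_nonneg h15 hA) (mul_nonneg (by norm_num) hB)
  have hle : ∑ i ∈ range N, ∑ j ∈ range N, w ((i:ℤ) - j) * g ((i:ℤ) - j)
      ≤ ∑ i ∈ range N, ∑ j ∈ range N, w ((i:ℤ) - j) * Vt ((i:ℤ) - j) := by
    apply Finset.sum_le_sum
    intro i _
    apply Finset.sum_le_sum
    intro j _
    exact mul_le_mul_of_nonneg_left (hgV _) (hwnn _)
  have hEval : ∑ i ∈ range N, ∑ j ∈ range N, w ((i:ℤ) - j) * Vt ((i:ℤ) - j)
      = (N:ℝ) * ((5 + Real.sqrt 5) * 1) + ((N:ℝ) - 1) * (2*Real.sqrt 5*t + 2*Real.sqrt 5*t)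
        + ((N:ℝ) - 2) * 0 := by
    have := hDS (fun d => w d * Vt d)
      (fun d hd => by show w d * Vt d = 0; rw [hVbig d hd, mul_zero]) N hN2
    rw [this]
    simp only [hw0, hw1, hwm1, hw2, hwm2, hV0, hV1, hVm1]
    ring
  have hfinal : (0:ℝ) ≤ (N:ℝ) * (5 + Real.sqrt 5) + ((N:ℝ) - 1) * (4*Real.sqrt 5*t) := by
    have := le_trans hcomb hle
    rw [hEval] at this
    linarith [this]
  have hND : ((5 + Real.sqrt 5)/(-4*Real.sqrt 5*t - (5 + Real.sqrt 5)))
      * (-4*Real.sqrt 5*t - (5 + Real.sqrt 5)) = 5 + Real.sqrt 5 :=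
    div_mul_cancel₀ _ (ne_of_gt hδ)
  have hnD : (5 + Real.sqrt 5) < (n:ℝ) * (-4*Real.sqrt 5*t - (5 + Real.sqrt 5)) := by
    calc (5 + Real.sqrt 5)
        = ((5 + Real.sqrt 5)/(-4*Real.sqrt 5*t - (5 + Real.sqrt 5)))
          * (-4*Real.sqrt 5*t - (5 + Real.sqrt 5)) := hND.symm
      _ < (n:ℝ) * (-4*Real.sqrt 5*t - (5 + Real.sqrt 5)) :=
          mul_lt_mul_of_pos_right hn hδ
  have hNcast : (N:ℝ) = (n:ℝ) + 2 := by rw [hNdef]; push_cast; ring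
  rw [hNcast] at hfinal
  have hx : ((n:ℝ)+1)*(-4*Real.sqrt 5*t - (5 + Real.sqrt 5))
      = (n:ℝ)*(-4*Real.sqrt 5*t - (5 + Real.sqrt 5))
        + (-4*Real.sqrt 5*t - (5 + Real.sqrt 5)) := by ring
  have hEq : ((n:ℝ)+2)*(5 + Real.sqrt 5) + (((n:ℝ)+2)-1)*(4*Real.sqrt 5*t)
      = (5 + Real.sqrt 5) - ((n:ℝ)+1)*(-4*Real.sqrt 5*t - (5 + Real.sqrt 5)) := by ring
  rw [hEq] at hfinal
  linarith [hfinal, hnD, hδ, hx]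


theorem Vt_stable_not_decomposable (t : ℝ) (ht₁ : -1 ≤ t)
    (ht₂ : t < -(Real.sqrt 5 + 1) / 4)
    (Vt : ℤ → ℝ)
    (hVt : Vt = fun n =>
      if n = 0 ∨ n = 2 ∨ n = -2 then 1
      else if n = 1 ∨ n = -1 then t
      else 0) :
    IsStable Vt ∧
      ¬ ∃ f g : ℤ → ℝ, (∀ n, 0 ≤ f n) ∧ IsPosDef g ∧ Vt = f + g :=
  ⟨fun ρ hfin hpos => stab t ht₁ Vt hVt ρ hfin hpos, nodecomp t ht₂ Vt hVt⟩
end
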